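/- arXiv:1603.08584 — 3 statements merged into one kernel-verified Lean document; each statement's English description precedes it below -/
import Mathlib

section
/- Let f : ℝ^k → ℝ be twice continuously differentiable with all first and second partial derivatives bounded in magnitude by C_f. Let p̂_1,…,p̂_k be mutually independent random estimators of densities p_1,…,p_k, and for x = (x_1,…,x_k) write B_{p_i}(x_i) = E p̂_i(x_i) − p_i(x_i). Then for every x, |E f(p̂_1(x_1),…,p̂_k(x_k)) − f(p_1(x_1),…,p_k(x_k))| ≤ C_f ( Σ_{i=1}^k |B_{p_i}(x_i)| + Σ_{1 ≤ i < j ≤ k} |B_{p_i}(x_i) B_{p_j}(x_j)| + Σ_{i=1}^k E[(p̂_i(x_i) − p_i(x_i))²] ). -/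
open MeasureTheory Real
open scoped BigOperators ENNReal

noncomputable section

/-- The closed unit cube `[0,1]^ι` inside `ι → ℝ`. -/
def cube (ι : Type*) : Set (ι → ℝ) := Set.Icc 0 1

/-- The boundary of the unit cube. -/
def cubeBoundary (ι : Type*) : Set (ι → ℝ) :=
  {x | x ∈ cube ι ∧ ∃ j, x j = 0 ∨ x j = 1}

/-- Partial derivative in the `j`-th coordinate direction. -/
def pderiv' {ι : Type*} [Fintype ι] [DecidableEq ι] (j : ι) (f : (ι → ℝ) → ℝ) :
    (ι → ℝ) → ℝ :=
  fun x => fderiv ℝ f x (Pi.single j 1)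

/-- Iterated partial derivative `D^js f` along a list `js` of coordinate directions;
a multi-index `i` with `|i| = ℓ` corresponds to any list of length `ℓ` containing each
direction `j` exactly `i j` times. -/
def multiDeriv {ι : Type*} [Fintype ι] [DecidableEq ι] :
    List ι → ((ι → ℝ) → ℝ) → ((ι → ℝ) → ℝ)
  | [], f => f
  | j :: js, f => pderiv' j (multiDeriv js f)

/-- `ℓ = ⌊β⌋`: the greatest integer *strictly* less than `β` (for `β > 0`). -/
def strictFloor (β : ℝ) : ℕ := ⌈β⌉₊ - 1

/-- The `r`-norm `‖v‖_r = (∑ |v j|^r)^{1/r}` on `ι → ℝ`. -/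
def rnorm {ι : Type*} [Fintype ι] (r : ℝ) (v : ι → ℝ) : ℝ :=
  (∑ j, |v j| ^ r) ^ (1 / r)

/-- The bounded Hölder class `C^β_{L,r}([0,1]^ι)`: all partial derivatives of order
`ℓ = ⌊β⌋` are `(β - ℓ)`-Hölder with constant `L` w.r.t. the `r`-norm. -/
def holderClass (β L r : ℝ) (ι : Type*) [Fintype ι] [DecidableEq ι] :
    Set ((ι → ℝ) → ℝ) :=
  {p | ∀ js : List ι, js.length = strictFloor β →
    ∀ x ∈ cube ι, ∀ y ∈ cube ι, x ≠ y →
      |multiDeriv js p x - multiDeriv js p y| ≤ L * rnorm r (x - y) ^ (β - strictFloor β)}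

/-- The class `Σ(β,L,r)` on `[0,1]^ι`: densities in the Hölder class whose partial
derivatives of orders `1,…,ℓ` tend to `0` as the distance to the boundary tends to `0`. -/
def sigmaClass (β L r : ℝ) (ι : Type*) [Fintype ι] [DecidableEq ι] :
    Set ((ι → ℝ) → ℝ) :=
  {p | p ∈ holderClass β L r ι ∧ (∀ x ∈ cube ι, 0 ≤ p x) ∧ (∫ x in cube ι, p x) = 1 ∧
    ∀ js : List ι, 1 ≤ js.length → js.length ≤ strictFloor β →
      ∀ ε > 0, ∃ δ > 0, ∀ x ∈ cube ι,
        Metric.infDist x (cubeBoundary ι) < δ → |multiDeriv js p x| < ε}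

/-- Reflections used to mirror a data point: identity, reflection across `0`,
and reflection across `1`. -/
def reflect : Fin 3 → ℝ → ℝ := fun s y => if s = 0 then y else if s = 1 then -y else 2 - y

/-- The mirrored product-kernel term contributed by one data point `y`:
the sum over all reflected copies of `y` of the product kernel evaluated at `x`. -/
def mirrorTerm {ι : Type*} [Fintype ι] [DecidableEq ι] (K : ℝ → ℝ) (hb : ℝ)
    (y x : ι → ℝ) : ℝ :=
  ∑ s : ι → Fin 3, ∏ j, K ((x j - reflect (s j) (y j)) / hb)

/-- The mirrored kernel density estimator on `[0,1]^ι` with kernel `K`, bandwidth `hb`,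
built from the sample `xs`. -/
def mKDE {ι : Type*} [Fintype ι] [DecidableEq ι] (K : ℝ → ℝ) (hb : ℝ) {n : ℕ}
    (xs : Fin n → ι → ℝ) : (ι → ℝ) → ℝ :=
  fun x => (1 / (n * hb ^ (Fintype.card ι))) * ∑ i, mirrorTerm K hb (xs i) x

/-- The density functional
`F(p₁,…,p_k) = ∫_{[0,1]^{d₁}×⋯×[0,1]^{d_k}} f(p₁(x₁),…,p_k(x_k)) dx`. -/
def DF {k : ℕ} (d : Fin k → ℕ) (f : (Fin k → ℝ) → ℝ)
    (p : ∀ i, (Fin (d i) → ℝ) → ℝ) : ℝ :=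
  ∫ x in Set.univ.pi fun i => cube (Fin (d i)), f fun i => p i (x i)

/-- The measure on `[0,1]^ι ⊆ (ι → ℝ)` with density `p` w.r.t. Lebesgue measure. -/
def densityMeasure {ι : Type*} [Fintype ι] (p : (ι → ℝ) → ℝ) : Measure (ι → ℝ) :=
  (volume.restrict (cube ι)).withDensity fun t => ENNReal.ofReal (p t)

/-- `X` consists of `k` mutually independent samples, the `i`-th being `n` i.i.d. points
drawn from the density `p i` on `[0,1]^{d i}`: the joint law of all `k·n` points is the
corresponding product measure. -/
def IsIIDSample {Ω : Type*} [MeasurableSpace Ω] (μ : Measure Ω) {k n : ℕ}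
    {d : Fin k → ℕ} (X : ∀ i : Fin k, Fin n → Ω → (Fin (d i) → ℝ))
    (p : ∀ i, (Fin (d i) → ℝ) → ℝ) : Prop :=
  (∀ i m, Measurable (X i m)) ∧
    Measure.map (fun ω (i : Fin k) (m : Fin n) => X i m ω) μ =
      Measure.pi fun i => Measure.pi fun _ : Fin n => densityMeasure (p i)

/-- A single family of `n` i.i.d. points drawn from the density `p` on `[0,1]^ι`. -/
def IsIIDSample₁ {Ω : Type*} [MeasurableSpace Ω] (μ : Measure Ω) {n : ℕ} {ι : Type*}
    [Fintype ι] (X : Fin n → Ω → (ι → ℝ)) (p : (ι → ℝ) → ℝ) : Prop :=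
  (∀ m, Measurable (X m)) ∧
    Measure.map (fun ω (m : Fin n) => X m ω) μ =
      Measure.pi fun _ : Fin n => densityMeasure p

/-- The kernel assumptions for the bias bound: `K` is supported on `[-1,1]`, integrates
to `1`, and has vanishing moments of orders `1,…,ℓ = ⌊β⌋`. -/
def KernelOK (K : ℝ → ℝ) (β : ℝ) : Prop :=
  Measurable K ∧ Function.support K ⊆ Set.Icc (-1) 1 ∧
    (∫ u in Set.Icc (-1 : ℝ) 1, K u) = 1 ∧
    ∀ j : ℕ, 1 ≤ j → j ≤ strictFloor β → (∫ u in Set.Icc (-1 : ℝ) 1, u ^ j * K u) = 0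

/-- `‖K‖₁ = ∫_ℝ |K(u)| du`. -/
def K1 (K : ℝ → ℝ) : ℝ := ∫ u, |K u|

/-- Clipping to the interval `[a,b]`. -/
def clip (a b t : ℝ) : ℝ := max a (min b t)


/-- Marginal density of `z` for a joint density on `[0,1]^{dx+dz}`. -/
def margZ' {dx dz : ℕ} (P : (Fin (dx + dz) → ℝ) → ℝ) : (Fin dz → ℝ) → ℝ :=
  fun z => ∫ x in cube (Fin dx), P (Fin.append x z)

/-- The conditional density functional (case `k = 1`):
`F(P) = ∫_Z Pz(z) f( ∫_X g( Pj(x,z)/Pz(z) ) dx ) dz`, where the joint density `Pj`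
and conditioning marginal `Pz` are allowed to be specified separately. -/
def condDF {dx dz : ℕ} (f g : ℝ → ℝ) (Pj : (Fin (dx + dz) → ℝ) → ℝ)
    (Pz : (Fin dz → ℝ) → ℝ) : ℝ :=
  ∫ z in cube (Fin dz), Pz z * f (∫ x in cube (Fin dx), g (Pj (Fin.append x z) / Pz z))

/-- Marginal density of `(x,z)` for a joint density on `[0,1]^{dx+dy+dz}`. -/
def margXZ {dx dy dz : ℕ} (P : (Fin (dx + dy + dz) → ℝ) → ℝ) :
    (Fin (dx + dz) → ℝ) → ℝ :=
  fun w => ∫ y in cube (Fin dy),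
    P (Fin.append (Fin.append (fun j => w (Fin.castAdd dz j)) y)
        (fun j => w (Fin.natAdd dx j)))

/-- Marginal density of `(y,z)` for a joint density on `[0,1]^{dx+dy+dz}`. -/
def margYZ {dx dy dz : ℕ} (P : (Fin (dx + dy + dz) → ℝ) → ℝ) :
    (Fin (dy + dz) → ℝ) → ℝ :=
  fun w => ∫ x in cube (Fin dx),
    P (Fin.append (Fin.append x (fun j => w (Fin.castAdd dz j)))
        (fun j => w (Fin.natAdd dy j)))

/-- Marginal density of `z` for a joint density on `[0,1]^{dx+dy+dz}`. -/
def margZ3 {dx dy dz : ℕ} (P : (Fin (dx + dy + dz) → ℝ) → ℝ) : (Fin dz → ℝ) → ℝ :=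
  fun z => ∫ w in cube (Fin (dx + dy)), P (Fin.append w z)

/-- The Rényi-α conditional mutual information functional, evaluated at (estimates of)
the densities `P(x,y,z)`, `P(x,z)`, `P(y,z)` and `P(z)`. -/
def renyiCMI {dx dy dz : ℕ} (α : ℝ) (Qxyz : (Fin (dx + dy + dz) → ℝ) → ℝ)
    (Qxz : (Fin (dx + dz) → ℝ) → ℝ) (Qyz : (Fin (dy + dz) → ℝ) → ℝ)
    (Qz : (Fin dz → ℝ) → ℝ) : ℝ :=
  (1 / (1 - α)) * ∫ z in cube (Fin dz), Qz z * Real.log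
    (∫ xy in (cube (Fin dx)) ×ˢ (cube (Fin dy)),
      (Qxyz (Fin.append (Fin.append xy.1 xy.2) z) / Qz z) ^ α *
        ((Qxz (Fin.append xy.1 z) * Qyz (Fin.append xy.2 z)) / (Qz z) ^ 2) ^ (1 - α))

end
open ProbabilityTheory

lemma taylor_one {g g' g'' : ℝ → ℝ} {C a b : ℝ}
    (hg : ∀ t, HasDerivAt g (g' t) t) (hg' : ∀ t, HasDerivAt g' (g'' t) t)
    (hC : ∀ t, |g'' t| ≤ C) :
    |g a - g b - g' b * (a - b)| ≤ C * (a - b) ^ 2 := by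
  have hC0 : 0 ≤ C := (abs_nonneg _).trans (hC b)
  have hlip : ∀ s t : ℝ, |g' s - g' t| ≤ C * |s - t| := by
    intro s t
    have := (convex_univ (𝕜 := ℝ) (E := ℝ)).norm_image_sub_le_of_norm_hasDerivWithin_le
      (f := g') (f' := g'') (fun u _ => (hg' u).hasDerivWithinAt)
      (fun u _ => by simpa [Real.norm_eq_abs] using hC u) (Set.mem_univ t) (Set.mem_univ s)
    simpa [Real.norm_eq_abs] using this
  set h : ℝ → ℝ := fun t => g t - g' b * t with hh
  have hhd : ∀ t, HasDerivAt h (g' t - g' b) t := by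
    intro t
    exact ((hg t).sub ((hasDerivAt_id t).const_mul (g' b))).congr_deriv (by simp)
  have hbound : ∀ t ∈ Set.uIcc b a, ‖g' t - g' b‖ ≤ C * |a - b| := by
    intro t ht
    rw [Set.mem_uIcc] at ht
    have h1 : |t - b| ≤ |a - b| := by
      rcases ht with ⟨h1, h2⟩ | ⟨h1, h2⟩ <;>
        · rw [abs_sub_comm t b] <;> rcases abs_cases (a - b) with ⟨he, _⟩ | ⟨he, _⟩ <;>
            rcases abs_cases (b - t) with ⟨hf, _⟩ | ⟨hf, _⟩ <;> linarith
    calc ‖g' t - g' b‖ ≤ C * |t - b| := hlip t b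
      _ ≤ C * |a - b| := by exact mul_le_mul_of_nonneg_left h1 hC0
  have := (convex_uIcc b a).norm_image_sub_le_of_norm_hasDerivWithin_le
    (f := h) (f' := fun t => g' t - g' b)
    (fun u _ => (hhd u).hasDerivWithinAt) hbound Set.left_mem_uIcc Set.right_mem_uIcc
  have h2 : h a - h b = g a - g b - g' b * (a - b) := by simp [hh]; ring
  rw [h2] at this
  calc |g a - g b - g' b * (a - b)| ≤ C * |a - b| * ‖a - b‖ := this
    _ = C * (a - b) ^ 2 := by
        rw [Real.norm_eq_abs, mul_assoc, ← abs_mul, ← pow_two, abs_of_nonneg (sq_nonneg _)]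

lemma iIndepFun_of_map_eq_pi {ι : Type*} [Fintype ι] {Ω : Type*} [MeasurableSpace Ω]
    (μ : Measure Ω) [IsProbabilityMeasure μ] {β : ι → Type*} [mβ : ∀ i, MeasurableSpace (β i)]
    (f : ∀ i, Ω → β i) (hf : ∀ i, Measurable (f i))
    (h : Measure.map (fun ω i => f i ω) μ = Measure.pi fun i => Measure.map (f i) μ) :
    iIndepFun f μ := by
  classical
  rw [iIndepFun_iff_measure_inter_preimage_eq_mul]
  intro S sets H
  have hprob : ∀ i, IsProbabilityMeasure (Measure.map (f i) μ) :=
    fun i => Measure.isProbabilityMeasure_map (hf i).aemeasurable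
  set sets' : ∀ i, Set (β i) := fun i => if i ∈ S then sets i else Set.univ with hsets'
  have hms : ∀ i, MeasurableSet (sets' i) := by
    intro i
    by_cases hi : i ∈ S
    · simpa [hsets', hi] using H i hi
    · simp [hsets', hi]
  have hpre : (fun ω i => f i ω) ⁻¹' (Set.univ.pi sets') = ⋂ i ∈ S, f i ⁻¹' sets i := by
    ext ω
    simp only [Set.mem_preimage, Set.mem_pi, Set.mem_univ, forall_true_left, Set.mem_iInter,
      hsets']
    constructor
    · intro h' i hi
      have := h' i
      simpa [hi] using this
    · intro h' i
      by_cases hi : i ∈ S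
      · simpa [hi] using h' i hi
      · simp [hi]
  have hmeasall : Measurable (fun ω (i : ι) => f i ω) := measurable_pi_lambda _ hf
  have := Measure.map_apply hmeasall (MeasurableSet.univ_pi hms) (μ := μ)
  rw [hpre, h, Measure.pi_pi] at this
  rw [← this]
  calc ∏ i : ι, Measure.map (f i) μ (sets' i)
      = ∏ i ∈ S, Measure.map (f i) μ (sets' i) :=
        (Finset.prod_subset (Finset.subset_univ S)
          (fun i _ hi => by simp [hsets', hi, measure_univ])).symm
    _ = ∏ i ∈ S, μ (f i ⁻¹' sets i) := Finset.prod_congr rfl fun i hi => by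
        simp only [hsets', if_pos hi]
        exact Measure.map_apply (hf i) (H i hi)


/-- **Pointwise Taylor bias bound.** For `f` twice continuously differentiable with all
first and second partial derivatives bounded by `C_f`, and mutually independent random
estimators `p̂₁,…,p̂_k` of the densities `p₁,…,p_k`, writing
`B_{p_i}(x_i) = E p̂_i(x_i) − p_i(x_i)`, for every `x`:
`|E f(p̂₁(x₁),…,p̂_k(x_k)) − f(p₁(x₁),…,p_k(x_k))| ≤
  C_f (∑_i |B_{p_i}(x_i)| + ∑_{i<j} |B_{p_i}(x_i) B_{p_j}(x_j)|
       + ∑_i E[(p̂_i(x_i) − p_i(x_i))²])`. -/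
theorem pointwise_taylor_bias {k : ℕ} (d : Fin k → ℕ) (C_f : ℝ)
    (Ω : Type) [MeasurableSpace Ω] (μ : Measure Ω) [IsProbabilityMeasure μ]
    (f : (Fin k → ℝ) → ℝ) (hf : ContDiff ℝ 2 f)
    (hf1 : ∀ (x : Fin k → ℝ) (i : Fin k), |pderiv' i f x| ≤ C_f)
    (hf2 : ∀ (x : Fin k → ℝ) (i j : Fin k), |pderiv' j (pderiv' i f) x| ≤ C_f)
    (p : ∀ i, (Fin (d i) → ℝ) → ℝ)
    (phat : ∀ i, Ω → (Fin (d i) → ℝ) → ℝ)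
    (hmeas : ∀ i, Measurable (phat i))
    -- mutual independence of the estimators as random elements:
    (hindep : Measure.map (fun ω i => phat i ω) μ =
      Measure.pi fun i => Measure.map (phat i) μ)
    (hL2 : ∀ i t, MemLp (fun ω => phat i ω t) 2 μ)
    (x : ∀ i, Fin (d i) → ℝ) :
    |(∫ ω, f (fun i => phat i ω (x i)) ∂μ) - f (fun i => p i (x i))| ≤
      C_f * ((∑ i, |(∫ ω, phat i ω (x i) ∂μ) - p i (x i)|) +
        (∑ i, ∑ j ∈ Finset.univ.filter fun j => i < j,
          |((∫ ω, phat i ω (x i) ∂μ) - p i (x i)) *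
            ((∫ ω, phat j ω (x j) ∂μ) - p j (x j))|) +
        ∑ i, ∫ ω, (phat i ω (x i) - p i (x i)) ^ 2 ∂μ) := by
  classical
  rcases Nat.eq_zero_or_pos k with hk | hk
  · subst hk
    have hω : ∀ ω : Ω, (fun i : Fin 0 => phat i ω (x i)) = fun i => p i (x i) :=
      fun ω => funext fun i => i.elim0
    simp only [hω, integral_const, measure_univ, ENNReal.toReal_one, one_smul]
    simp
  have hC : 0 ≤ C_f := (abs_nonneg _).trans (hf1 (fun _ => 0) ⟨0, hk⟩)
  set a : Fin k → Ω → ℝ := fun i ω => phat i ω (x i) with ha_def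
  set b : Fin k → ℝ := fun i => p i (x i) with hb_def
  have ha_meas : ∀ i, Measurable (a i) := fun i => (measurable_pi_apply (x i)).comp (hmeas i)
  have haL2 : ∀ i, MemLp (a i) 2 μ := fun i => hL2 i (x i)
  have haInt : ∀ i, Integrable (a i) μ := fun i => (haL2 i).integrable one_le_two
  have hΔL2 : ∀ i, MemLp (fun ω => a i ω - b i) 2 μ :=
    fun i => (haL2 i).sub (memLp_const (b i))
  have hΔsq : ∀ i, Integrable (fun ω => (a i ω - b i) ^ 2) μ := fun i => (hΔL2 i).integrable_sq
  have hΔInt : ∀ i, Integrable (fun ω => a i ω - b i) μ :=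
    fun i => (haInt i).sub (integrable_const _)
  have hiid : iIndepFun a μ := by
    have h0 := iIndepFun_of_map_eq_pi μ phat hmeas hindep
    exact h0.comp (fun i q => q (x i)) (fun i => measurable_pi_apply (x i))
  have hfc : Continuous f := hf.continuous
  have hf' : ContDiff ℝ 1 (fderiv ℝ f) := hf.fderiv_right (by norm_num)
  have hpd1 : ∀ i : Fin k, ContDiff ℝ 1 (pderiv' i f) := by
    intro i
    unfold pderiv'
    exact hf'.clm_apply contDiff_const
  set F : ℕ → Ω → ℝ := fun m ω => f (fun j => if (j : ℕ) < m then a j ω else b j) with hF_def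
  have hvec_meas : ∀ m : ℕ,
      Measurable (fun ω (j : Fin k) => if (j : ℕ) < m then a j ω else b j) := by
    intro m
    apply measurable_pi_lambda
    intro j
    by_cases hj : (j : ℕ) < m
    · simpa [hj] using ha_meas j
    · simp [hj]
  have hF_meas : ∀ m, Measurable (F m) := fun m => hfc.measurable.comp (hvec_meas m)
  -- the main step
  have hstep : ∀ i : Fin k,
      Integrable (fun ω => F ((i : ℕ) + 1) ω - F (i : ℕ) ω) μ ∧
      |∫ ω, (F ((i : ℕ) + 1) ω - F (i : ℕ) ω) ∂μ| ≤
        C_f * |(∫ ω, a i ω ∂μ) - b i| + C_f * ∫ ω, (a i ω - b i) ^ 2 ∂μ := by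
    intro i
    set m : ℕ := (i : ℕ) with hm_def
    set e : Fin k → ℝ := Pi.single i (1 : ℝ) with he_def
    set z : Ω → Fin k → ℝ :=
      fun ω j => if (j : ℕ) < m then a j ω else if j = i then 0 else b j with hz_def
    have hz_meas : Measurable z := by
      apply measurable_pi_lambda
      intro j
      by_cases hj : (j : ℕ) < m
      · simpa [hz_def, hj] using ha_meas j
      · simp only [hz_def, hj, if_false]
        exact measurable_const
    have hu1 : ∀ ω, z ω + a i ω • e = fun j : Fin k => if (j : ℕ) < m + 1 then a j ω else b j := by
      intro ω
      funext j
      by_cases hj : j = i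
      · subst hj
        simp [hz_def, he_def, Pi.single_apply, hm_def]
      · have hne : (j : ℕ) ≠ m := fun h => hj (Fin.ext h)
        have : ((j : ℕ) < m + 1) = ((j : ℕ) < m) := by
          simp only [eq_iff_iff]; omega
        simp [hz_def, he_def, Pi.single_apply, hj, this]
    have hu0 : ∀ ω, z ω + b i • e = fun j : Fin k => if (j : ℕ) < m then a j ω else b j := by
      intro ω
      funext j
      by_cases hj : j = i
      · subst hj
        simp [hz_def, he_def, Pi.single_apply, hm_def]
      · simp [hz_def, he_def, Pi.single_apply, hj]
    have hline : ∀ (c : Fin k → ℝ) (t : ℝ), HasDerivAt (fun s : ℝ => c + s • e) e t := by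
      intro c t
      simpa using ((hasDerivAt_id t).smul_const e).const_add c
    have hg1 : ∀ (c : Fin k → ℝ) (t : ℝ),
        HasDerivAt (fun s => f (c + s • e)) (pderiv' i f (c + t • e)) t := by
      intro c t
      exact ((hf.differentiable (by norm_num)) _).hasFDerivAt.comp_hasDerivAt t (hline c t)
    have hg2 : ∀ (c : Fin k → ℝ) (t : ℝ),
        HasDerivAt (fun s => pderiv' i f (c + s • e))
          (pderiv' i (pderiv' i f) (c + t • e)) t := by
      intro c t
      exact (((hpd1 i).differentiable (by norm_num)) _).hasFDerivAt.comp_hasDerivAt t (hline c t)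
    set W : Ω → ℝ := fun ω => pderiv' i f (z ω + b i • e) with hW_def
    have hW_meas : Measurable W :=
      ((hpd1 i).continuous).measurable.comp (hz_meas.add measurable_const)
    have hW_bdd : ∀ ω, |W ω| ≤ C_f := fun ω => hf1 _ i
    have htay : ∀ ω, |f (z ω + a i ω • e) - f (z ω + b i • e) - W ω * (a i ω - b i)| ≤
        C_f * (a i ω - b i) ^ 2 := by
      intro ω
      exact taylor_one (hg1 (z ω)) (hg2 (z ω)) (fun t => hf2 _ i i)
    have hFsucc : ∀ ω, F (m + 1) ω = f (z ω + a i ω • e) := by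
      intro ω; rw [hF_def, hu1 ω]
    have hFm : ∀ ω, F m ω = f (z ω + b i • e) := by
      intro ω; rw [hF_def, hu0 ω]
    -- independence of W and a i - b i
    set S : Finset (Fin k) := Finset.univ.filter (fun j : Fin k => (j : ℕ) < m) with hS_def
    have hiS : i ∉ S := by simp [hS_def, hm_def]
    have hdisj : Disjoint S ({i} : Finset (Fin k)) := by
      simp [Finset.disjoint_singleton_right, hiS]
    set Φ : ({ j // j ∈ S } → ℝ) → ℝ := fun v =>
      pderiv' i f ((fun j => if hj : j ∈ S then v ⟨j, hj⟩ else if j = i then 0 else b j)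
        + b i • e) with hΦ_def
    have hΦ_meas : Measurable Φ := by
      apply ((hpd1 i).continuous).measurable.comp
      apply Measurable.add_const
      apply measurable_pi_lambda
      intro j
      by_cases hj : j ∈ S
      · simpa [hj] using measurable_pi_apply (⟨j, hj⟩ : { j // j ∈ S })
      · simp [hj]
    set ψ : ({ j // j ∈ ({i} : Finset (Fin k)) } → ℝ) → ℝ :=
      fun v => v ⟨i, Finset.mem_singleton_self i⟩ - b i with hψ_def
    have hψ_meas : Measurable ψ := (measurable_pi_apply _).sub_const _
    have hind0 := hiid.indepFun_finset S ({i} : Finset (Fin k)) hdisj ha_meas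
    have hindWΔ : IndepFun W (fun ω => a i ω - b i) μ := by
      have hcomp := hind0.comp hΦ_meas hψ_meas
      have e1 : (Φ ∘ fun ω (j : { j // j ∈ S }) => a j ω) = W := by
        funext ω
        simp only [Function.comp_apply, hΦ_def, hW_def]
        congr 1
        funext j
        by_cases hj : j ∈ S
        · have : (j : ℕ) < m := by simpa [hS_def] using hj
          simp [hj, hz_def, this]
        · have : ¬ (j : ℕ) < m := by simpa [hS_def] using hj
          simp [hj, hz_def, this]
      have e2 : (ψ ∘ fun ω (j : { j // j ∈ ({i} : Finset (Fin k)) }) => a j ω) =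
          fun ω => a i ω - b i := by
        funext ω
        simp [hψ_def]
      rwa [e1, e2] at hcomp
    -- integrability facts
    have hW_int : Integrable W μ := by
      apply Integrable.mono' (integrable_const C_f) hW_meas.aestronglyMeasurable
      filter_upwards with ω
      simpa [Real.norm_eq_abs] using hW_bdd ω
    have hWΔ_int : Integrable (fun ω => W ω * (a i ω - b i)) μ := by
      apply (hΔInt i).bdd_mul (c := C_f) hW_meas.aestronglyMeasurable
      exact Filter.Eventually.of_forall (fun ω => by simpa [Real.norm_eq_abs] using hW_bdd ω)
    set r : Ω → ℝ := fun ω => F (m + 1) ω - F m ω - W ω * (a i ω - b i) with hr_def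
    have hr_meas : Measurable r :=
      ((hF_meas (m + 1)).sub (hF_meas m)).sub (hW_meas.mul ((ha_meas i).sub_const _))
    have hr_bdd : ∀ ω, |r ω| ≤ C_f * (a i ω - b i) ^ 2 := by
      intro ω
      rw [hr_def]
      simpa [hFsucc ω, hFm ω] using htay ω
    have hr_int : Integrable r μ := by
      apply Integrable.mono' ((hΔsq i).const_mul C_f) hr_meas.aestronglyMeasurable
      filter_upwards with ω
      simpa [Real.norm_eq_abs] using hr_bdd ω
    have hdiff_eq : (fun ω => F (m + 1) ω - F m ω) =
        fun ω => W ω * (a i ω - b i) + r ω := by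
      funext ω
      simp only [hr_def]
      ring
    have hdiff_int : Integrable (fun ω => F (m + 1) ω - F m ω) μ := by
      rw [hdiff_eq]; exact hWΔ_int.add hr_int
    refine ⟨hdiff_int, ?_⟩
    have hmul : ∫ ω, W ω * (a i ω - b i) ∂μ =
        (∫ ω, W ω ∂μ) * ∫ ω, (a i ω - b i) ∂μ :=
      hindWΔ.integral_mul_eq_mul_integral hW_meas.aestronglyMeasurable (hΔInt i).aestronglyMeasurable
    have hWint_bdd : |∫ ω, W ω ∂μ| ≤ C_f := by
      calc |∫ ω, W ω ∂μ| ≤ ∫ ω, |W ω| ∂μ := by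
            simpa [Real.norm_eq_abs] using
              norm_integral_le_integral_norm (μ := μ) (fun ω => W ω)
        _ ≤ ∫ _ω, C_f ∂μ := integral_mono hW_int.abs (integrable_const _) hW_bdd
        _ = C_f := by simp [measure_univ]
    have hΔint_eq : ∫ ω, (a i ω - b i) ∂μ = (∫ ω, a i ω ∂μ) - b i := by
      rw [integral_sub (haInt i) (integrable_const _)]
      simp [measure_univ]
    calc |∫ ω, (F (m + 1) ω - F m ω) ∂μ|
        = |(∫ ω, W ω * (a i ω - b i) ∂μ) + ∫ ω, r ω ∂μ| := by
          rw [hdiff_eq, integral_add hWΔ_int hr_int]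
      _ ≤ |∫ ω, W ω * (a i ω - b i) ∂μ| + |∫ ω, r ω ∂μ| := abs_add_le _ _
      _ ≤ C_f * |(∫ ω, a i ω ∂μ) - b i| + C_f * ∫ ω, (a i ω - b i) ^ 2 ∂μ := by
          gcongr ?_ + ?_
          · rw [hmul, abs_mul, hΔint_eq]
            exact mul_le_mul_of_nonneg_right hWint_bdd (abs_nonneg _)
          · calc |∫ ω, r ω ∂μ| ≤ ∫ ω, |r ω| ∂μ := by
                  simpa [Real.norm_eq_abs] using
                    norm_integral_le_integral_norm (μ := μ) (fun ω => r ω)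
              _ ≤ ∫ ω, C_f * (a i ω - b i) ^ 2 ∂μ :=
                  integral_mono hr_int.abs ((hΔsq i).const_mul C_f) hr_bdd
              _ = C_f * ∫ ω, (a i ω - b i) ^ 2 ∂μ := integral_const_mul _ _
  -- assemble
  have htel : ∀ ω, F k ω - F 0 ω = ∑ m ∈ Finset.range k, (F (m + 1) ω - F m ω) :=
    fun ω => (Finset.sum_range_sub (fun m => F m ω) k).symm
  have hFk : ∀ ω, F k ω = f (fun i => a i ω) := by
    intro ω
    show f _ = f _
    congr 1
    funext j
    simp [j.isLt]
  have hF0 : ∀ ω, F 0 ω = f b := by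
    intro ω
    show f _ = f _
    congr 1
  have hint_m : ∀ m ∈ Finset.range k, Integrable (fun ω => F (m + 1) ω - F m ω) μ := by
    intro m hm
    have hm' : m < k := Finset.mem_range.mp hm
    exact (hstep ⟨m, hm'⟩).1
  have hsum_int : Integrable (fun ω => F k ω - F 0 ω) μ := by
    have : (fun ω => F k ω - F 0 ω) =
        fun ω => ∑ m ∈ Finset.range k, (F (m + 1) ω - F m ω) := funext htel
    rw [this]
    exact integrable_finset_sum _ hint_m
  have hFk_int : Integrable (F k) μ := by
    have : F k = fun ω => (F k ω - F 0 ω) + F 0 ω := by funext ω; ring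
    rw [this]
    apply hsum_int.add
    have : F 0 = fun _ω => f b := funext hF0
    rw [this]
    exact integrable_const _
  have hLHS : (∫ ω, f (fun i => phat i ω (x i)) ∂μ) - f (fun i => p i (x i)) =
      ∫ ω, (F k ω - F 0 ω) ∂μ := by
    rw [integral_sub hFk_int]
    · congr 1
      · apply integral_congr_ae
        filter_upwards with ω
        rw [hFk ω]
      · have : F 0 = fun _ω : Ω => f b := funext hF0
        rw [this]
        simp [measure_univ, hb_def]
    · have : F 0 = fun _ω : Ω => f b := funext hF0
      rw [this]
      exact integrable_const _
  rw [hLHS]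
  have key : |∫ ω, (F k ω - F 0 ω) ∂μ| ≤
      ∑ i : Fin k, (C_f * |(∫ ω, a i ω ∂μ) - b i| + C_f * ∫ ω, (a i ω - b i) ^ 2 ∂μ) := by
    have h1 : ∫ ω, (F k ω - F 0 ω) ∂μ =
        ∑ m ∈ Finset.range k, ∫ ω, (F (m + 1) ω - F m ω) ∂μ := by
      rw [funext htel]
      exact integral_finset_sum _ hint_m
    rw [h1]
    calc |∑ m ∈ Finset.range k, ∫ ω, (F (m + 1) ω - F m ω) ∂μ|
        ≤ ∑ m ∈ Finset.range k, |∫ ω, (F (m + 1) ω - F m ω) ∂μ| :=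
          Finset.abs_sum_le_sum_abs _ _
      _ ≤ ∑ m ∈ Finset.range k, (if hm : m < k then
            C_f * |(∫ ω, a ⟨m, hm⟩ ω ∂μ) - b ⟨m, hm⟩|
              + C_f * ∫ ω, (a ⟨m, hm⟩ ω - b ⟨m, hm⟩) ^ 2 ∂μ else 0) := by
          apply Finset.sum_le_sum
          intro m hm
          have hm' : m < k := Finset.mem_range.mp hm
          rw [dif_pos hm']
          exact (hstep ⟨m, hm'⟩).2
      _ = ∑ i : Fin k, (C_f * |(∫ ω, a i ω ∂μ) - b i| +
            C_f * ∫ ω, (a i ω - b i) ^ 2 ∂μ) := by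
          rw [← Fin.sum_univ_eq_sum_range
            (fun m => if hm : m < k then
              C_f * |(∫ ω, a ⟨m, hm⟩ ω ∂μ) - b ⟨m, hm⟩|
                + C_f * ∫ ω, (a ⟨m, hm⟩ ω - b ⟨m, hm⟩) ^ 2 ∂μ else 0) k]
          apply Finset.sum_congr rfl
          intro i _
          rw [dif_pos i.isLt]
  refine key.trans ?_
  have hS2 : 0 ≤ ∑ i : Fin k, ∑ j ∈ Finset.univ.filter fun j => i < j,
      |((∫ ω, phat i ω (x i) ∂μ) - p i (x i)) *
        ((∫ ω, phat j ω (x j) ∂μ) - p j (x j))| :=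
    Finset.sum_nonneg fun i _ => Finset.sum_nonneg fun j _ => abs_nonneg _
  have hexp : ∑ i : Fin k, (C_f * |(∫ ω, a i ω ∂μ) - b i| +
      C_f * ∫ ω, (a i ω - b i) ^ 2 ∂μ) =
      C_f * ((∑ i, |(∫ ω, phat i ω (x i) ∂μ) - p i (x i)|) +
        ∑ i, ∫ ω, (phat i ω (x i) - p i (x i)) ^ 2 ∂μ) := by
    rw [Finset.sum_add_distrib, ← Finset.mul_sum, ← Finset.mul_sum, ← mul_add]
  rw [hexp]
  apply mul_le_mul_of_nonneg_left _ hC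
  linarith
end

section
/- Let P_1, P_2 : X × Z → ℝ be joint densities on X × Z = [0,1]^{d_x} × [0,1]^{d_z} with marginals P_1(z), P_2(z) bounded below by κ_1 > 0 and joint densities bounded above by κ_2 < ∞. Suppose f and g are continuously differentiable, with C_f = sup_{x ∈ [c_g, C_g]} |f(x)| and C_{f'} = sup_{x ∈ [c_g, C_g]} |f'(x)|, where c_g = inf g([0, κ_2/κ_1]) and C_g = sup g([0, κ_2/κ_1]). Then |F(P_1) − F(P_2)| ≤ ∫_Z C_f |P_1(z) − P_2(z)| + κ_2 C_{f'} | G_{P_1(z)}(P_1(·,z)) − G_{P_2(z)}(P_2(·,z)) | dz, where G_{P(z)}(Q) = ∫_X g(Q(x)/P(z)) dx. -/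
open MeasureTheory Real
open scoped BigOperators ENNReal

section AuxStab
open MeasureTheory Real

variable {dx dz : ℕ}

lemma measurableSet_cube' (ι : Type*) [Fintype ι] : MeasurableSet (cube ι) := by
  exact measurableSet_Icc

lemma volume_cube (ι : Type*) [Fintype ι] : volume (cube ι) = 1 := by
  simp [cube, Real.volume_Icc_pi]

lemma zero_mem_cube (ι : Type*) [Fintype ι] : (0 : ι → ℝ) ∈ cube ι :=
  Set.left_mem_Icc.mpr zero_le_one

lemma append_mem_cube {x : Fin dx → ℝ} {z : Fin dz → ℝ}
    (hx : x ∈ cube (Fin dx)) (hz : z ∈ cube (Fin dz)) :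
    Fin.append x z ∈ cube (Fin (dx + dz)) := by
  obtain ⟨hx0, hx1⟩ := hx
  obtain ⟨hz0, hz1⟩ := hz
  constructor <;> intro i <;>
  · induction i using Fin.addCases with
    | left j => simpa using (by first | exact hx0 j | exact hx1 j : _)
    | right j => simpa using (by first | exact hz0 j | exact hz1 j : _)

lemma measurable_appendL (z : Fin dz → ℝ) :
    Measurable (fun x : Fin dx → ℝ => Fin.append x z) := by
  apply measurable_pi_lambda
  intro i
  induction i using Fin.addCases with
  | left j => simp only [Fin.append_left]; exact measurable_pi_apply j
  | right j => simp only [Fin.append_right]; exact measurable_const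

lemma measurable_append2 :
    Measurable (fun p : (Fin dz → ℝ) × (Fin dx → ℝ) => Fin.append p.2 p.1) := by
  apply measurable_pi_lambda
  intro i
  induction i using Fin.addCases with
  | left j => simp only [Fin.append_left]; exact (measurable_pi_apply j).comp measurable_snd
  | right j => simp only [Fin.append_right]; exact (measurable_pi_apply j).comp measurable_fst

lemma measurable_param_setIntegral
    {F : (Fin dz → ℝ) × (Fin dx → ℝ) → ℝ} (hF : Measurable F) :
    Measurable (fun z => ∫ x in cube (Fin dx), F (z, x)) := by
  have h1 : ∀ z, (∫ x in cube (Fin dx), F (z, x)) =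
      ∫ x, (cube (Fin dx)).indicator (fun x => F (z, x)) x := by
    intro z; rw [integral_indicator (measurableSet_cube' _)]
  simp_rw [h1]
  have hmeas : Measurable fun p : (Fin dz → ℝ) × (Fin dx → ℝ) =>
      (cube (Fin dx)).indicator (fun x => F (p.1, x)) p.2 := by
    have h2 : (fun p : (Fin dz → ℝ) × (Fin dx → ℝ) =>
        (cube (Fin dx)).indicator (fun x => F (p.1, x)) p.2) =
        fun p => Set.indicator ((Set.univ : Set (Fin dz → ℝ)) ×ˢ cube (Fin dx)) F p := by
      funext p
      by_cases h : p.2 ∈ cube (Fin dx) <;> simp [Set.indicator_apply, h]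
    rw [h2]
    exact hF.indicator (MeasurableSet.univ.prod (measurableSet_cube' _))
  exact (hmeas.stronglyMeasurable.integral_prod_right').measurable

lemma measurable_margZ' {P : (Fin (dx + dz) → ℝ) → ℝ} (hm : Measurable P) :
    Measurable (margZ' P) :=
  measurable_param_setIntegral (hm.comp measurable_append2)

lemma measurable_Afun {P : (Fin (dx + dz) → ℝ) → ℝ} (hm : Measurable P)
    {g : ℝ → ℝ} (hg : Continuous g) :
    Measurable fun z : Fin dz → ℝ =>
      ∫ x in cube (Fin dx), g (P (Fin.append x z) / margZ' P z) :=
  measurable_param_setIntegral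
    (hg.measurable.comp ((hm.comp measurable_append2).div
      ((measurable_margZ' hm).comp measurable_fst)))


noncomputable def Afun {dx dz : ℕ} (g : ℝ → ℝ) (P : (Fin (dx + dz) → ℝ) → ℝ) :
    (Fin dz → ℝ) → ℝ :=
  fun z => ∫ x in cube (Fin dx), g (P (Fin.append x z) / margZ' P z)

end AuxStab


/-- **Stability of the conditional density functional.** For joint densities `P₁, P₂` on
`[0,1]^{dx} × [0,1]^{dz}` whose `z`-marginals are bounded below by `κ₁ > 0` and whose
joints are bounded above by `κ₂ < ∞`, and continuously differentiable `f, g` with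
`C_f = sup_{[c_g,C_g]} |f|`, `C_{f'} = sup_{[c_g,C_g]} |f'|` where
`c_g = inf g([0,κ₂/κ₁])`, `C_g = sup g([0,κ₂/κ₁])`:
`|F(P₁) − F(P₂)| ≤ ∫_Z C_f |P₁(z) − P₂(z)| + κ₂ C_{f'} |G_{P₁(z)}(P₁(·,z)) −
G_{P₂(z)}(P₂(·,z))| dz`, where `G_{P(z)}(Q) = ∫_X g(Q(x)/P(z)) dx`. -/
theorem conditional_functional_stability {dx dz : ℕ} (κ₁ κ₂ : ℝ) (hκ₁ : 0 < κ₁)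
    (P₁ P₂ : (Fin (dx + dz) → ℝ) → ℝ)
    (hm₁ : Measurable P₁) (hm₂ : Measurable P₂)
    (hpos₁ : ∀ w ∈ cube (Fin (dx + dz)), 0 ≤ P₁ w)
    (hpos₂ : ∀ w ∈ cube (Fin (dx + dz)), 0 ≤ P₂ w)
    (hint₁ : IntegrableOn P₁ (cube (Fin (dx + dz))))
    (hint₂ : IntegrableOn P₂ (cube (Fin (dx + dz))))
    (hden₁ : (∫ w in cube (Fin (dx + dz)), P₁ w) = 1)
    (hden₂ : (∫ w in cube (Fin (dx + dz)), P₂ w) = 1)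
    (hlow₁ : ∀ z ∈ cube (Fin dz), κ₁ ≤ margZ' P₁ z)
    (hlow₂ : ∀ z ∈ cube (Fin dz), κ₁ ≤ margZ' P₂ z)
    (hup₁ : ∀ w ∈ cube (Fin (dx + dz)), P₁ w ≤ κ₂)
    (hup₂ : ∀ w ∈ cube (Fin (dx + dz)), P₂ w ≤ κ₂)
    (f g : ℝ → ℝ) (hf : ContDiff ℝ 1 f) (hg : ContDiff ℝ 1 g)
    (cg Cg Cf Cf' : ℝ)
    (hcg : cg = sInf (g '' Set.Icc 0 (κ₂ / κ₁)))
    (hCg : Cg = sSup (g '' Set.Icc 0 (κ₂ / κ₁)))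
    (hCf : Cf = sSup ((fun t => |f t|) '' Set.Icc cg Cg))
    (hCf' : Cf' = sSup ((fun t => |deriv f t|) '' Set.Icc cg Cg)) :
    |condDF f g P₁ (margZ' P₁) - condDF f g P₂ (margZ' P₂)| ≤
      ∫ z in cube (Fin dz),
        (Cf * |margZ' P₁ z - margZ' P₂ z| +
          κ₂ * Cf' *
            |(∫ x in cube (Fin dx), g (P₁ (Fin.append x z) / margZ' P₁ z)) -
              ∫ x in cube (Fin dx), g (P₂ (Fin.append x z) / margZ' P₂ z)|) := by
  classical
  have hX : MeasurableSet (cube (Fin dx)) := measurableSet_cube' _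
  have hZ : MeasurableSet (cube (Fin dz)) := measurableSet_cube' _
  have hvolX : (volume (cube (Fin dx))).toReal = 1 := by rw [volume_cube]; simp
  have hvolXne : volume (cube (Fin dx)) ≠ ⊤ := by rw [volume_cube]; exact ENNReal.one_ne_top
  have hvolXlt : volume (cube (Fin dx)) < ⊤ := by rw [volume_cube]; exact ENNReal.one_lt_top
  have hvolZne : volume (cube (Fin dz)) ≠ ⊤ := by rw [volume_cube]; exact ENNReal.one_ne_top
  have hκ₂0 : 0 ≤ κ₂ := le_trans (hpos₁ 0 (zero_mem_cube _)) (hup₁ 0 (zero_mem_cube _))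
  have hratio0 : (0:ℝ) ≤ κ₂ / κ₁ := div_nonneg hκ₂0 hκ₁.le
  have hgK : IsCompact (g '' Set.Icc 0 (κ₂ / κ₁)) := isCompact_Icc.image hg.continuous
  have hcg_le : ∀ t ∈ Set.Icc (0:ℝ) (κ₂ / κ₁), cg ≤ g t ∧ g t ≤ Cg := by
    intro t ht
    exact ⟨hcg ▸ csInf_le hgK.bddBelow ⟨t, ht, rfl⟩, hCg ▸ le_csSup hgK.bddAbove ⟨t, ht, rfl⟩⟩
  have hcgCg : cg ≤ Cg :=
    le_trans (hcg_le 0 ⟨le_rfl, hratio0⟩).1 (hcg_le 0 ⟨le_rfl, hratio0⟩).2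
  have hfK : IsCompact ((fun t => |f t|) '' Set.Icc cg Cg) :=
    isCompact_Icc.image (continuous_abs.comp hf.continuous)
  have hf_bd : ∀ t ∈ Set.Icc cg Cg, |f t| ≤ Cf := fun t ht =>
    hCf ▸ le_csSup hfK.bddAbove ⟨t, ht, rfl⟩
  have hf'cont : Continuous (deriv f) := hf.continuous_deriv le_rfl
  have hf'K : IsCompact ((fun t => |deriv f t|) '' Set.Icc cg Cg) :=
    isCompact_Icc.image (continuous_abs.comp hf'cont)
  have hf'_bd : ∀ t ∈ Set.Icc cg Cg, |deriv f t| ≤ Cf' := fun t ht =>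
    hCf' ▸ le_csSup hf'K.bddAbove ⟨t, ht, rfl⟩
  have hCf0 : 0 ≤ Cf := le_trans (abs_nonneg _) (hf_bd cg ⟨le_rfl, hcgCg⟩)
  have hCf'0 : 0 ≤ Cf' := le_trans (abs_nonneg _) (hf'_bd cg ⟨le_rfl, hcgCg⟩)
  have hlip : ∀ a ∈ Set.Icc cg Cg, ∀ b ∈ Set.Icc cg Cg, |f a - f b| ≤ Cf' * |a - b| := by
    intro a ha b hb
    have := Convex.norm_image_sub_le_of_norm_deriv_le (f := f) (s := Set.Icc cg Cg)
      (fun x _ => hf.differentiable one_ne_zero x) (fun x hx => hf'_bd x hx)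
      (convex_Icc _ _) hb ha
    simpa [Real.norm_eq_abs] using this
  -- master facts for each density
  have master : ∀ P : (Fin (dx + dz) → ℝ) → ℝ, Measurable P →
      (∀ w ∈ cube (Fin (dx + dz)), 0 ≤ P w) →
      (∀ w ∈ cube (Fin (dx + dz)), P w ≤ κ₂) →
      (∀ z ∈ cube (Fin dz), κ₁ ≤ margZ' P z) →
      ∀ z ∈ cube (Fin dz),
        margZ' P z ≤ κ₂ ∧ Afun g P z ∈ Set.Icc cg Cg := by
    intro P hm hpos hup hlow z hz
    have hmx : Measurable fun x : Fin dx → ℝ => P (Fin.append x z) :=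
      hm.comp (measurable_appendL z)
    have hintP : IntegrableOn (fun x => P (Fin.append x z)) (cube (Fin dx)) := by
      apply Measure.integrableOn_of_bounded hvolXne hmx.aestronglyMeasurable (M := κ₂)
      filter_upwards [ae_restrict_mem hX] with x hx
      rw [Real.norm_eq_abs, abs_le]
      exact ⟨le_trans (by linarith) (hpos _ (append_mem_cube hx hz)),
        hup _ (append_mem_cube hx hz)⟩
    have hq_le : margZ' P z ≤ κ₂ := by
      have h := setIntegral_mono_on hintP
        (integrableOn_const hvolXne) hX
        (fun x hx => hup _ (append_mem_cube hx hz))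
      simpa [margZ', setIntegral_const, measureReal_def, hvolX] using h
    have hqpos : 0 < margZ' P z := lt_of_lt_of_le hκ₁ (hlow z hz)
    have hrange : ∀ x ∈ cube (Fin dx),
        P (Fin.append x z) / margZ' P z ∈ Set.Icc (0:ℝ) (κ₂ / κ₁) := by
      intro x hx
      constructor
      · exact div_nonneg (hpos _ (append_mem_cube hx hz)) hqpos.le
      · exact div_le_div₀ hκ₂0 (hup _ (append_mem_cube hx hz)) hκ₁ (hlow z hz)
    have hintg : IntegrableOn
        (fun x => g (P (Fin.append x z) / margZ' P z)) (cube (Fin dx)) := by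
      apply Measure.integrableOn_of_bounded hvolXne
        ((hg.continuous.measurable.comp (hmx.div_const _)).aestronglyMeasurable)
        (M := max |cg| |Cg|)
      filter_upwards [ae_restrict_mem hX] with x hx
      rw [Real.norm_eq_abs]
      exact abs_le_max_abs_abs (hcg_le _ (hrange x hx)).1 (hcg_le _ (hrange x hx)).2
    refine ⟨hq_le, ?_, ?_⟩
    · have h := setIntegral_mono_on
        (integrableOn_const hvolXne) hintg hX
        (fun x hx => (hcg_le _ (hrange x hx)).1)
      simpa [Afun, setIntegral_const, measureReal_def, hvolX] using h
    · have h := setIntegral_mono_on hintg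
        (integrableOn_const hvolXne) hX
        (fun x hx => (hcg_le _ (hrange x hx)).2)
      simpa [Afun, setIntegral_const, measureReal_def, hvolX] using h
  have hB₁ := master P₁ hm₁ hpos₁ hup₁ hlow₁
  have hB₂ := master P₂ hm₂ hpos₂ hup₂ hlow₂
  have hq₁m : Measurable (margZ' P₁) := measurable_margZ' hm₁
  have hq₂m : Measurable (margZ' P₂) := measurable_margZ' hm₂
  have hA₁m : Measurable (Afun g P₁) := measurable_Afun hm₁ hg.continuous
  have hA₂m : Measurable (Afun g P₂) := measurable_Afun hm₂ hg.continuous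
  -- integrability on Z
  have hqbd : ∀ (P : (Fin (dx + dz) → ℝ) → ℝ),
      (∀ z ∈ cube (Fin dz), κ₁ ≤ margZ' P z) →
      (∀ z ∈ cube (Fin dz), margZ' P z ≤ κ₂) →
      ∀ z ∈ cube (Fin dz), |margZ' P z| ≤ κ₂ := by
    intro P hlow hup' z hz
    exact abs_le.mpr ⟨by linarith [hlow z hz], hup' z hz⟩
  have hintq₁ : IntegrableOn (margZ' P₁) (cube (Fin dz)) := by
    apply Measure.integrableOn_of_bounded hvolZne hq₁m.aestronglyMeasurable (M := κ₂)
    filter_upwards [ae_restrict_mem hZ] with z hz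
    exact hqbd P₁ hlow₁ (fun z hz => (hB₁ z hz).1) z hz
  have hintq₂ : IntegrableOn (margZ' P₂) (cube (Fin dz)) := by
    apply Measure.integrableOn_of_bounded hvolZne hq₂m.aestronglyMeasurable (M := κ₂)
    filter_upwards [ae_restrict_mem hZ] with z hz
    exact hqbd P₂ hlow₂ (fun z hz => (hB₂ z hz).1) z hz
  have hintA₁ : IntegrableOn (Afun g P₁) (cube (Fin dz)) := by
    apply Measure.integrableOn_of_bounded hvolZne hA₁m.aestronglyMeasurable
      (M := max |cg| |Cg|)
    filter_upwards [ae_restrict_mem hZ] with z hz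
    exact abs_le_max_abs_abs (hB₁ z hz).2.1 (hB₁ z hz).2.2
  have hintA₂ : IntegrableOn (Afun g P₂) (cube (Fin dz)) := by
    apply Measure.integrableOn_of_bounded hvolZne hA₂m.aestronglyMeasurable
      (M := max |cg| |Cg|)
    filter_upwards [ae_restrict_mem hZ] with z hz
    exact abs_le_max_abs_abs (hB₂ z hz).2.1 (hB₂ z hz).2.2
  have hinth₁ : IntegrableOn (fun z => margZ' P₁ z * f (Afun g P₁ z)) (cube (Fin dz)) := by
    apply Measure.integrableOn_of_bounded hvolZne
      ((hq₁m.mul (hf.continuous.measurable.comp hA₁m)).aestronglyMeasurable) (M := κ₂ * Cf)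
    filter_upwards [ae_restrict_mem hZ] with z hz
    rw [Real.norm_eq_abs, Pi.mul_apply, Function.comp_apply, abs_mul]
    exact mul_le_mul (hqbd P₁ hlow₁ (fun z hz => (hB₁ z hz).1) z hz)
      (hf_bd _ (hB₁ z hz).2) (abs_nonneg _) hκ₂0
  have hinth₂ : IntegrableOn (fun z => margZ' P₂ z * f (Afun g P₂ z)) (cube (Fin dz)) := by
    apply Measure.integrableOn_of_bounded hvolZne
      ((hq₂m.mul (hf.continuous.measurable.comp hA₂m)).aestronglyMeasurable) (M := κ₂ * Cf)
    filter_upwards [ae_restrict_mem hZ] with z hz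
    rw [Real.norm_eq_abs, Pi.mul_apply, Function.comp_apply, abs_mul]
    exact mul_le_mul (hqbd P₂ hlow₂ (fun z hz => (hB₂ z hz).1) z hz)
      (hf_bd _ (hB₂ z hz).2) (abs_nonneg _) hκ₂0
  have hintB : IntegrableOn (fun z =>
      Cf * |margZ' P₁ z - margZ' P₂ z| + κ₂ * Cf' * |Afun g P₁ z - Afun g P₂ z|)
      (cube (Fin dz)) :=
    ((hintq₁.sub hintq₂).abs.const_mul Cf).add
      ((hintA₁.sub hintA₂).abs.const_mul (κ₂ * Cf'))
  have key : ∀ z ∈ cube (Fin dz),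
      |margZ' P₁ z * f (Afun g P₁ z) - margZ' P₂ z * f (Afun g P₂ z)| ≤
        Cf * |margZ' P₁ z - margZ' P₂ z| + κ₂ * Cf' * |Afun g P₁ z - Afun g P₂ z| := by
    intro z hz
    have hq2nn : 0 ≤ margZ' P₂ z := le_trans hκ₁.le (hlow₂ z hz)
    have e : margZ' P₁ z * f (Afun g P₁ z) - margZ' P₂ z * f (Afun g P₂ z) =
        (margZ' P₁ z - margZ' P₂ z) * f (Afun g P₁ z) +
          margZ' P₂ z * (f (Afun g P₁ z) - f (Afun g P₂ z)) := by ring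
    rw [e]
    have h1 : |(margZ' P₁ z - margZ' P₂ z) * f (Afun g P₁ z)| ≤
        |margZ' P₁ z - margZ' P₂ z| * Cf := by
      rw [abs_mul]
      exact mul_le_mul_of_nonneg_left (hf_bd _ (hB₁ z hz).2) (abs_nonneg _)
    have h2 : |margZ' P₂ z * (f (Afun g P₁ z) - f (Afun g P₂ z))| ≤
        κ₂ * (Cf' * |Afun g P₁ z - Afun g P₂ z|) := by
      rw [abs_mul, abs_of_nonneg hq2nn]
      exact mul_le_mul (hB₂ z hz).1 (hlip _ (hB₁ z hz).2 _ (hB₂ z hz).2)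
        (abs_nonneg _) hκ₂0
    calc |(margZ' P₁ z - margZ' P₂ z) * f (Afun g P₁ z) +
          margZ' P₂ z * (f (Afun g P₁ z) - f (Afun g P₂ z))| ≤
        |(margZ' P₁ z - margZ' P₂ z) * f (Afun g P₁ z)| +
          |margZ' P₂ z * (f (Afun g P₁ z) - f (Afun g P₂ z))| := abs_add_le _ _
      _ ≤ |margZ' P₁ z - margZ' P₂ z| * Cf +
          κ₂ * (Cf' * |Afun g P₁ z - Afun g P₂ z|) := add_le_add h1 h2
      _ = Cf * |margZ' P₁ z - margZ' P₂ z| +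
          κ₂ * Cf' * |Afun g P₁ z - Afun g P₂ z| := by ring
  show |(∫ z in cube (Fin dz), margZ' P₁ z * f (Afun g P₁ z)) -
      ∫ z in cube (Fin dz), margZ' P₂ z * f (Afun g P₂ z)| ≤
      ∫ z in cube (Fin dz),
        (Cf * |margZ' P₁ z - margZ' P₂ z| + κ₂ * Cf' * |Afun g P₁ z - Afun g P₂ z|)
  rw [← integral_sub hinth₁ hinth₂]
  calc |∫ z in cube (Fin dz),
        (margZ' P₁ z * f (Afun g P₁ z) - margZ' P₂ z * f (Afun g P₂ z))| ≤
      ∫ z in cube (Fin dz),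
        |margZ' P₁ z * f (Afun g P₁ z) - margZ' P₂ z * f (Afun g P₂ z)| := by
        simpa [Real.norm_eq_abs] using norm_integral_le_integral_norm
          (μ := volume.restrict (cube (Fin dz)))
          (fun z => margZ' P₁ z * f (Afun g P₁ z) - margZ' P₂ z * f (Afun g P₂ z))
    _ ≤ _ := setIntegral_mono_on (hinth₁.sub hinth₂).abs hintB hZ key
end

section
/- Let P_1 and P_2 be joint density estimates on [0,1]^{d_x} × [0,1]^{d_z} as in the conditional-functional setting (each a pair of clipped mirrored KDEs of P(x,z) and P(z) with values in [κ_1, κ_2], computed from split samples of size n each), differing in exactly one data point, and let g be continuously differentiable on [0, κ_2/κ_1]. Then ∫_Z | G_{P_1(z)}(P_1(·,z)) − G_{P_2(z)}(P_2(·,z)) | dz ≤ C_V/n, where G_{P(z)}(Q) = ∫_X g(Q(x)/P(z)) dx and C_V depends on sup_{x ∈ [κ_1/κ_2, κ_2/κ_1]} |g'(x)| and ‖K‖_1. -/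
open MeasureTheory Real
open scoped BigOperators ENNReal

section StabilityHelpers2

open MeasureTheory Finset

variable {K : ℝ → ℝ}

lemma integrable_Kaff (hKi : Integrable K) {h : ℝ} (hh : h ≠ 0) (c : ℝ) :
    Integrable fun t : ℝ => K ((t - c) / h) :=
  (hKi.comp_div hh).comp_sub_right c

lemma integral_Kaff_abs (hKi : Integrable K) {h : ℝ} (hh : 0 < h) (c : ℝ) :
    ∫ t : ℝ, |K ((t - c) / h)| = h * K1 K := by
  have h1 : (∫ t : ℝ, |K ((t - c) / h)|) = ∫ t : ℝ, (fun u : ℝ => |K (u / h)|) (t - c) := rfl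
  rw [h1, integral_sub_right_eq_self (fun u : ℝ => |K (u / h)|) c,
    MeasureTheory.Measure.integral_comp_div (fun u : ℝ => |K u|) h, smul_eq_mul,
    abs_of_pos hh, K1]

lemma setIntegral_prod_le {ι : Type*} [Fintype ι] (f : ι → ℝ → ℝ)
    (h0 : ∀ j t, 0 ≤ f j t) (hi : ∀ j, Integrable (f j)) (s : Set (ι → ℝ)) :
    ∫ t in s, ∏ j, f j (t j) ≤ ∏ j, ∫ t, f j t := by
  have h1 : Integrable fun t : ι → ℝ => ∏ j, f j (t j) := Integrable.fintype_prod hi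
  calc ∫ t in s, ∏ j, f j (t j) ≤ ∫ t : ι → ℝ, ∏ j, f j (t j) :=
        setIntegral_le_integral h1
          (Filter.Eventually.of_forall fun t => prod_nonneg fun j _ => h0 j _)
    _ = ∏ j, ∫ t, f j t := integral_fintype_prod_eq_prod (μ := fun _ => volume) f

lemma measurable_mirrorTerm {ι : Type*} [Fintype ι] [DecidableEq ι] (hKm : Measurable K)
    (hb : ℝ) (y : ι → ℝ) : Measurable (mirrorTerm K hb y) := by
  unfold mirrorTerm
  refine Finset.measurable_sum _ fun s _ => Finset.measurable_prod _ fun j _ => ?_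
  exact hKm.comp (((measurable_pi_apply j).sub_const _).div_const _)

lemma measurable_mKDE {ι : Type*} [Fintype ι] [DecidableEq ι] (hKm : Measurable K)
    (hb : ℝ) {n : ℕ} (xs : Fin n → ι → ℝ) : Measurable (mKDE K hb xs) := by
  unfold mKDE
  exact (Finset.measurable_sum _ fun i _ => measurable_mirrorTerm hKm hb (xs i)).const_mul _

lemma integrable_mirrorTerm {ι : Type*} [Fintype ι] [DecidableEq ι] (hKi : Integrable K)
    {hb : ℝ} (hh : hb ≠ 0) (y : ι → ℝ) : Integrable (mirrorTerm K hb y) := by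
  unfold mirrorTerm
  exact integrable_finset_sum _ fun s _ =>
    Integrable.fintype_prod fun j => integrable_Kaff hKi hh _

lemma abs_mirrorTerm_le {ι : Type*} [Fintype ι] [DecidableEq ι] (K : ℝ → ℝ) (hb : ℝ)
    (y x : ι → ℝ) :
    |mirrorTerm K hb y x| ≤ ∑ s : ι → Fin 3, ∏ j, |K ((x j - reflect (s j) (y j)) / hb)| := by
  refine (Finset.abs_sum_le_sum_abs _ _).trans (le_of_eq (Finset.sum_congr rfl fun s _ => ?_))
  exact Finset.abs_prod _ _

lemma setIntegral_abs_mirrorTerm_le {ι : Type*} [Fintype ι] [DecidableEq ι]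
    (hKi : Integrable K) {hb : ℝ} (hh : 0 < hb) (y : ι → ℝ) :
    ∫ x in cube ι, |mirrorTerm K hb y x| ≤
      3 ^ Fintype.card ι * (hb * K1 K) ^ Fintype.card ι := by
  have hint : ∀ s : ι → Fin 3,
      Integrable fun x : ι → ℝ => ∏ j, |K ((x j - reflect (s j) (y j)) / hb)| :=
    fun s => Integrable.fintype_prod fun j => (integrable_Kaff hKi hh.ne' _).abs
  calc ∫ x in cube ι, |mirrorTerm K hb y x|
      ≤ ∫ x in cube ι, ∑ s : ι → Fin 3, ∏ j, |K ((x j - reflect (s j) (y j)) / hb)| := by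
        refine integral_mono_of_nonneg (Filter.Eventually.of_forall fun x => abs_nonneg _)
          ((integrable_finset_sum _ fun s _ => hint s).integrableOn)
          (Filter.Eventually.of_forall fun x => abs_mirrorTerm_le K hb y x)
    _ = ∑ s : ι → Fin 3, ∫ x in cube ι, ∏ j, |K ((x j - reflect (s j) (y j)) / hb)| :=
        integral_finset_sum _ fun s _ => (hint s).integrableOn
    _ ≤ ∑ _s : ι → Fin 3, (hb * K1 K) ^ Fintype.card ι := by
        refine Finset.sum_le_sum fun s _ => ?_
        refine (setIntegral_prod_le _ (fun j t => abs_nonneg _)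
          (fun j => (integrable_Kaff hKi hh.ne' _).abs) _).trans (le_of_eq ?_)
        rw [Finset.prod_congr rfl fun (j : ι) _ => integral_Kaff_abs hKi hh
          (reflect (s j) (y j)), Finset.prod_const, Finset.card_univ]
    _ = 3 ^ Fintype.card ι * (hb * K1 K) ^ Fintype.card ι := by
        rw [Finset.sum_const, Finset.card_univ, nsmul_eq_mul]
        simp [Fintype.card_fun]

lemma measurable_append_left {dx dz : ℕ} (z : Fin dz → ℝ) :
    Measurable fun x : Fin dx → ℝ => Fin.append x z := by
  refine measurable_pi_lambda _ fun i => ?_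
  refine Fin.addCases (fun j => ?_) (fun j => ?_) i
  · simp only [Fin.append_left]; exact measurable_pi_apply j
  · simp only [Fin.append_right]; exact measurable_const

lemma mKDE_sub {ι : Type*} [Fintype ι] [DecidableEq ι] (K : ℝ → ℝ) (hb : ℝ) {n : ℕ}
    (xs ys : Fin n → ι → ℝ) (i₀ : Fin n) (hxy : ∀ m, m ≠ i₀ → xs m = ys m) (t : ι → ℝ) :
    mKDE K hb xs t - mKDE K hb ys t = (1 / (n * hb ^ Fintype.card ι)) *
      (mirrorTerm K hb (xs i₀) t - mirrorTerm K hb (ys i₀) t) := by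
  unfold mKDE
  rw [← mul_sub, ← Finset.sum_sub_distrib]
  congr 1
  refine Finset.sum_eq_single_of_mem i₀ (Finset.mem_univ _) fun m _ hm => ?_
  rw [hxy m hm, sub_self]

end StabilityHelpers2

section StabilityHelpers

open MeasureTheory Finset

lemma clip_mem {a b : ℝ} (hab : a ≤ b) (t : ℝ) : clip a b t ∈ Set.Icc a b :=
  ⟨le_max_left _ _, max_le hab (min_le_left _ _)⟩

lemma clip_of_mem {a b t : ℝ} (ht : t ∈ Set.Icc a b) : clip a b t = t := by
  unfold clip
  rw [min_eq_right ht.2, max_eq_right ht.1]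

lemma clip_lipschitz (a b s t : ℝ) : |clip a b s - clip a b t| ≤ |s - t| := by
  unfold clip
  calc |max a (min b s) - max a (min b t)|
      = |max (min b s) a - max (min b t) a| := by rw [max_comm a, max_comm a]
    _ ≤ |min b s - min b t| := abs_max_sub_max_le_abs _ _ _
    _ ≤ max |b - b| |s - t| := abs_min_sub_min_le_max _ _ _ _
    _ = |s - t| := by simp

lemma continuous_clip (a b : ℝ) : Continuous (clip a b) :=
  continuous_const.max (continuous_const.min continuous_id)

lemma K1_nonneg (K : ℝ → ℝ) : 0 ≤ K1 K := integral_nonneg fun _ => abs_nonneg _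

lemma ratio_mem {κ₁ κ₂ q p : ℝ} (hκ₁ : 0 < κ₁) (hq : q ∈ Set.Icc κ₁ κ₂)
    (hp : p ∈ Set.Icc κ₁ κ₂) : q / p ∈ Set.Icc (κ₁ / κ₂) (κ₂ / κ₁) := by
  have hq0 : 0 < q := hκ₁.trans_le hq.1
  have hp0 : 0 < p := hκ₁.trans_le hp.1
  exact ⟨div_le_div₀ hq0.le hq.1 hp0 hp.2, div_le_div₀ (hq0.le.trans hq.2) hq.2 hκ₁ hp.1⟩

lemma ratio_diff {κ₁ κ₂ q₁ q₂ p₁ p₂ : ℝ} (hκ₁ : 0 < κ₁)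
    (hq₂ : q₂ ∈ Set.Icc κ₁ κ₂) (hp₁ : p₁ ∈ Set.Icc κ₁ κ₂) (hp₂ : p₂ ∈ Set.Icc κ₁ κ₂) :
    |q₁ / p₁ - q₂ / p₂| ≤ |q₁ - q₂| / κ₁ + κ₂ * |p₁ - p₂| / κ₁ ^ 2 := by
  have hp₁0 : (0:ℝ) < p₁ := hκ₁.trans_le hp₁.1
  have hp₂0 : (0:ℝ) < p₂ := hκ₁.trans_le hp₂.1
  have hq₂0 : (0:ℝ) ≤ q₂ := (hκ₁.trans_le hq₂.1).le
  have key : q₁ / p₁ - q₂ / p₂ = (q₁ - q₂) / p₁ + q₂ / (p₁ * p₂) * (p₂ - p₁) := by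
    field_simp
    ring
  calc |q₁ / p₁ - q₂ / p₂| ≤ |(q₁ - q₂) / p₁| + |q₂ / (p₁ * p₂) * (p₂ - p₁)| := by
        rw [key]; exact abs_add_le _ _
    _ = |q₁ - q₂| / p₁ + q₂ / (p₁ * p₂) * |p₂ - p₁| := by
        rw [abs_div, abs_mul, abs_div, abs_mul, abs_of_pos hp₁0, abs_of_pos hp₂0,
          abs_of_nonneg hq₂0]
    _ ≤ |q₁ - q₂| / κ₁ + κ₂ / κ₁ ^ 2 * |p₂ - p₁| := by
        have h1 : |q₁ - q₂| / p₁ ≤ |q₁ - q₂| / κ₁ := by gcongr; exact hp₁.1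
        have h2 : q₂ / (p₁ * p₂) ≤ κ₂ / κ₁ ^ 2 := by
          apply div_le_div₀ (hκ₁.le.trans (hq₂.1.trans hq₂.2)) hq₂.2 (by positivity)
          rw [sq]; exact mul_le_mul hp₁.1 hp₂.1 hκ₁.le (hκ₁.le.trans hp₁.1)
        exact add_le_add h1 (mul_le_mul_of_nonneg_right h2 (abs_nonneg _))
    _ = |q₁ - q₂| / κ₁ + κ₂ * |p₁ - p₂| / κ₁ ^ 2 := by
        rw [abs_sub_comm p₂ p₁]; ring

end StabilityHelpers

section StabilityHelpers3

open MeasureTheory Finset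

variable {K : ℝ → ℝ}

lemma mirrorTerm_append_eq {dx dz : ℕ} (K : ℝ → ℝ) (h : ℝ) (y : Fin (dx + dz) → ℝ)
    (z : Fin dz → ℝ) :
    (fun x : Fin dx → ℝ => mirrorTerm K h y (Fin.append x z)) =
      fun x => ∑ s : Fin (dx + dz) → Fin 3,
        (∏ j : Fin dx, K ((x j - reflect (s (Fin.castAdd dz j)) (y (Fin.castAdd dz j))) / h)) *
        (∏ j : Fin dz, K ((z j - reflect (s (Fin.natAdd dx j)) (y (Fin.natAdd dx j))) / h)) := by
  funext x
  unfold mirrorTerm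
  refine Finset.sum_congr rfl fun s _ => ?_
  rw [Fin.prod_univ_add]
  simp only [Fin.append_left, Fin.append_right]

lemma integrableOn_mirrorTerm_append {dx dz : ℕ} (hKi : Integrable K) {h : ℝ} (hh : h ≠ 0)
    (y : Fin (dx + dz) → ℝ) (z : Fin dz → ℝ) :
    IntegrableOn (fun x : Fin dx → ℝ => |mirrorTerm K h y (Fin.append x z)|)
      (cube (Fin dx)) := by
  have : Integrable (fun x : Fin dx → ℝ => mirrorTerm K h y (Fin.append x z)) := by
    rw [mirrorTerm_append_eq]
    exact integrable_finset_sum _ fun s _ =>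
      (Integrable.fintype_prod fun j => integrable_Kaff hKi hh _).mul_const _
  exact this.abs.integrableOn

lemma abs_mirrorTerm_append_le {dx dz : ℕ} (K : ℝ → ℝ) (h : ℝ) (y : Fin (dx + dz) → ℝ)
    (x : Fin dx → ℝ) (z : Fin dz → ℝ) :
    |mirrorTerm K h y (Fin.append x z)| ≤ ∑ s : Fin (dx + dz) → Fin 3,
      (∏ j : Fin dx, |K ((x j - reflect (s (Fin.castAdd dz j)) (y (Fin.castAdd dz j))) / h)|) *
      (∏ j : Fin dz, |K ((z j - reflect (s (Fin.natAdd dx j)) (y (Fin.natAdd dx j))) / h)|) := by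
  refine (abs_mirrorTerm_le K h y _).trans (le_of_eq (Finset.sum_congr rfl fun s _ => ?_))
  rw [Fin.prod_univ_add]
  simp only [Fin.append_left, Fin.append_right]

/-- The `z`-profile of a mirrored-kernel term. -/
noncomputable def Tprof (K : ℝ → ℝ) (h : ℝ) {dx dz : ℕ} (y : Fin (dx + dz) → ℝ) (z : Fin dz → ℝ) : ℝ :=
  ∑ s : Fin (dx + dz) → Fin 3,
    ∏ j : Fin dz, |K ((z j - reflect (s (Fin.natAdd dx j)) (y (Fin.natAdd dx j))) / h)|

lemma Tprof_nonneg (K : ℝ → ℝ) (h : ℝ) {dx dz : ℕ} (y : Fin (dx + dz) → ℝ)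
    (z : Fin dz → ℝ) : 0 ≤ Tprof K h y z :=
  Finset.sum_nonneg fun s _ => Finset.prod_nonneg fun j _ => abs_nonneg _

lemma integrableOn_Tprof {dx dz : ℕ} (hKi : Integrable K) {h : ℝ} (hh : h ≠ 0)
    (y : Fin (dx + dz) → ℝ) :
    IntegrableOn (fun z => Tprof K h (dx := dx) y z) (cube (Fin dz)) := by
  unfold Tprof
  exact (integrable_finset_sum _ fun s _ =>
    Integrable.fintype_prod fun j => (integrable_Kaff hKi hh _).abs).integrableOn

lemma setIntegral_abs_mirrorTerm_append_le {dx dz : ℕ} (hKi : Integrable K) {h : ℝ}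
    (hh : 0 < h) (y : Fin (dx + dz) → ℝ) (z : Fin dz → ℝ) :
    ∫ x in cube (Fin dx), |mirrorTerm K h y (Fin.append x z)| ≤
      (h * K1 K) ^ dx * Tprof K h y z := by
  have hint : ∀ s : Fin (dx + dz) → Fin 3, Integrable fun x : Fin dx → ℝ =>
      ∏ j : Fin dx, |K ((x j - reflect (s (Fin.castAdd dz j)) (y (Fin.castAdd dz j))) / h)| :=
    fun s => Integrable.fintype_prod fun j => (integrable_Kaff hKi hh.ne' _).abs
  calc ∫ x in cube (Fin dx), |mirrorTerm K h y (Fin.append x z)|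
      ≤ ∫ x in cube (Fin dx), ∑ s : Fin (dx + dz) → Fin 3,
          (∏ j : Fin dx, |K ((x j - reflect (s (Fin.castAdd dz j)) (y (Fin.castAdd dz j))) / h)|) *
          (∏ j : Fin dz, |K ((z j - reflect (s (Fin.natAdd dx j)) (y (Fin.natAdd dx j))) / h)|) :=
        integral_mono_of_nonneg (Filter.Eventually.of_forall fun x => abs_nonneg _)
          ((integrable_finset_sum _ fun s _ => (hint s).mul_const _).integrableOn)
          (Filter.Eventually.of_forall fun x => abs_mirrorTerm_append_le K h y x z)
    _ = ∑ s : Fin (dx + dz) → Fin 3, (∫ x in cube (Fin dx),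
          ∏ j : Fin dx, |K ((x j - reflect (s (Fin.castAdd dz j)) (y (Fin.castAdd dz j))) / h)|) *
          (∏ j : Fin dz, |K ((z j - reflect (s (Fin.natAdd dx j)) (y (Fin.natAdd dx j))) / h)|) := by
        rw [integral_finset_sum _ fun s _ => ((hint s).mul_const _).integrableOn]
        exact Finset.sum_congr rfl fun s _ => integral_mul_const _ _
    _ ≤ ∑ s : Fin (dx + dz) → Fin 3, (h * K1 K) ^ dx *
          (∏ j : Fin dz, |K ((z j - reflect (s (Fin.natAdd dx j)) (y (Fin.natAdd dx j))) / h)|) := by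
        refine Finset.sum_le_sum fun s _ => mul_le_mul_of_nonneg_right ?_
          (Finset.prod_nonneg fun j _ => abs_nonneg _)
        refine (setIntegral_prod_le _ (fun j t => abs_nonneg _)
          (fun j => (integrable_Kaff hKi hh.ne' _).abs) _).trans (le_of_eq ?_)
        rw [Finset.prod_congr rfl fun (j : Fin dx) _ => integral_Kaff_abs hKi hh
          (reflect (s (Fin.castAdd dz j)) (y (Fin.castAdd dz j))), Finset.prod_const,
          Finset.card_univ, Fintype.card_fin]
    _ = (h * K1 K) ^ dx * Tprof K h y z := by rw [Tprof, Finset.mul_sum]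

lemma setIntegral_Tprof_le {dx dz : ℕ} (hKi : Integrable K) {h : ℝ} (hh : 0 < h)
    (y : Fin (dx + dz) → ℝ) :
    ∫ z in cube (Fin dz), Tprof K h y z ≤ 3 ^ (dx + dz) * (h * K1 K) ^ dz := by
  unfold Tprof
  calc ∫ z in cube (Fin dz), ∑ s : Fin (dx + dz) → Fin 3,
        ∏ j : Fin dz, |K ((z j - reflect (s (Fin.natAdd dx j)) (y (Fin.natAdd dx j))) / h)|
      = ∑ s : Fin (dx + dz) → Fin 3, ∫ z in cube (Fin dz),
          ∏ j : Fin dz, |K ((z j - reflect (s (Fin.natAdd dx j)) (y (Fin.natAdd dx j))) / h)| :=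
        integral_finset_sum _ fun s _ => (Integrable.fintype_prod fun j =>
          (integrable_Kaff hKi hh.ne' _).abs).integrableOn
    _ ≤ ∑ _s : Fin (dx + dz) → Fin 3, (h * K1 K) ^ dz := by
        refine Finset.sum_le_sum fun s _ => ?_
        refine (setIntegral_prod_le _ (fun j t => abs_nonneg _)
          (fun j => (integrable_Kaff hKi hh.ne' _).abs) _).trans (le_of_eq ?_)
        rw [Finset.prod_congr rfl fun (j : Fin dz) _ => integral_Kaff_abs hKi hh
          (reflect (s (Fin.natAdd dx j)) (y (Fin.natAdd dx j))), Finset.prod_const,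
          Finset.card_univ, Fintype.card_fin]
    _ = 3 ^ (dx + dz) * (h * K1 K) ^ dz := by
        rw [Finset.sum_const, Finset.card_univ, nsmul_eq_mul]
        simp [Fintype.card_fun]

end StabilityHelpers3

section StabilityHelpers4

open MeasureTheory Finset

lemma exists_lip {κ₁ κ₂ : ℝ} (hκ₁ : 0 < κ₁) (hκ : κ₁ ≤ κ₂) {g : ℝ → ℝ}
    (hg : ContDiffOn ℝ 1 g (Set.Icc 0 (κ₂ / κ₁))) :
    ∃ M : ℝ, 0 ≤ M ∧ ∀ u ∈ Set.Icc (0:ℝ) (κ₂ / κ₁), ∀ v ∈ Set.Icc (0:ℝ) (κ₂ / κ₁),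
      |g u - g v| ≤ M * |u - v| := by
  have hb : (0:ℝ) < κ₂ / κ₁ := div_pos (hκ₁.trans_le hκ) hκ₁
  have hud : UniqueDiffOn ℝ (Set.Icc (0:ℝ) (κ₂ / κ₁)) := uniqueDiffOn_Icc hb
  have hdiff : DifferentiableOn ℝ g (Set.Icc 0 (κ₂ / κ₁)) := hg.differentiableOn one_ne_zero
  have hcont : ContinuousOn (fun t => fderivWithin ℝ g (Set.Icc 0 (κ₂ / κ₁)) t)
      (Set.Icc 0 (κ₂ / κ₁)) := hg.continuousOn_fderivWithin hud le_rfl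
  obtain ⟨C, hC⟩ := isCompact_Icc.exists_bound_of_continuousOn hcont
  refine ⟨max C 0, le_max_right _ _, fun u hu v hv => ?_⟩
  have := Convex.norm_image_sub_le_of_norm_fderivWithin_le (C := max C 0) hdiff
    (fun t ht => (hC t ht).trans (le_max_left _ _)) (convex_Icc _ _) hv hu
  simpa [Real.norm_eq_abs] using this

lemma integrableOn_g_ratio {dx : ℕ} {κ₁ κ₂ : ℝ} (hκ₁ : 0 < κ₁) (hκ : κ₁ ≤ κ₂) {g : ℝ → ℝ}
    (hg : ContDiffOn ℝ 1 g (Set.Icc 0 (κ₂ / κ₁))) {Q : (Fin dx → ℝ) → ℝ} (hQ : Measurable Q)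
    (p : ℝ) :
    IntegrableOn (fun x => g (clip κ₁ κ₂ (Q x) / clip κ₁ κ₂ p)) (cube (Fin dx)) := by
  have hκ₂0 : 0 < κ₂ := hκ₁.trans_le hκ
  have hsub : Set.Icc (κ₁ / κ₂) (κ₂ / κ₁) ⊆ Set.Icc (0:ℝ) (κ₂ / κ₁) :=
    Set.Icc_subset_Icc (by positivity) le_rfl
  have hab : κ₁ / κ₂ ≤ κ₂ / κ₁ := div_le_div₀ hκ₂0.le hκ hκ₁ hκ
  set gc : ℝ → ℝ := fun t => g (clip (κ₁ / κ₂) (κ₂ / κ₁) t) with hgc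
  have hgtc : Continuous gc := hg.continuousOn.comp_continuous (continuous_clip _ _)
    (fun t => hsub (clip_mem hab t))
  obtain ⟨B, hB⟩ := (isCompact_Icc (a := (0:ℝ)) (b := κ₂ / κ₁)).exists_bound_of_continuousOn
    hg.continuousOn
  have heq : (fun x => g (clip κ₁ κ₂ (Q x) / clip κ₁ κ₂ p)) =
      fun x => gc (clip κ₁ κ₂ (Q x) / clip κ₁ κ₂ p) := by
    funext x
    rw [hgc]
    simp only []
    rw [clip_of_mem (ratio_mem hκ₁ (clip_mem hκ _) (clip_mem hκ p))]
  rw [heq]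
  have hmeas : Measurable fun x : Fin dx → ℝ => clip κ₁ κ₂ (Q x) / clip κ₁ κ₂ p :=
    ((continuous_clip κ₁ κ₂).measurable.comp hQ).div_const _
  refine Integrable.mono' (g := fun _ => B) (integrableOn_const ?_)
    ((hgtc.measurable.comp hmeas).aestronglyMeasurable)
    (Filter.Eventually.of_forall fun x => ?_)
  · exact (IsCompact.measure_lt_top isCompact_Icc).ne
  · rw [Real.norm_eq_abs]
    have : |g (clip (κ₁ / κ₂) (κ₂ / κ₁) (clip κ₁ κ₂ (Q x) / clip κ₁ κ₂ p))| ≤ B := by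
      have := hB _ (hsub (clip_mem hab (clip κ₁ κ₂ (Q x) / clip κ₁ κ₂ p)))
      simpa [Real.norm_eq_abs] using this
    exact this

lemma inner_bound {dx : ℕ} {κ₁ κ₂ M : ℝ} (hκ₁ : 0 < κ₁) (hκ : κ₁ ≤ κ₂) {g : ℝ → ℝ}
    (hM0 : 0 ≤ M)
    (hLip : ∀ u ∈ Set.Icc (0:ℝ) (κ₂ / κ₁), ∀ v ∈ Set.Icc (0:ℝ) (κ₂ / κ₁),
      |g u - g v| ≤ M * |u - v|)
    (Q₁ Q₂ : (Fin dx → ℝ) → ℝ) (p₁ p₂ : ℝ)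
    (hI₁ : IntegrableOn (fun x => g (clip κ₁ κ₂ (Q₁ x) / clip κ₁ κ₂ p₁)) (cube (Fin dx)))
    (hI₂ : IntegrableOn (fun x => g (clip κ₁ κ₂ (Q₂ x) / clip κ₁ κ₂ p₂)) (cube (Fin dx)))
    (R : (Fin dx → ℝ) → ℝ) (hR : IntegrableOn R (cube (Fin dx)))
    (hRb : ∀ x, |Q₁ x - Q₂ x| / κ₁ + κ₂ * |p₁ - p₂| / κ₁ ^ 2 ≤ R x) :
    |(∫ x in cube (Fin dx), g (clip κ₁ κ₂ (Q₁ x) / clip κ₁ κ₂ p₁)) -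
      ∫ x in cube (Fin dx), g (clip κ₁ κ₂ (Q₂ x) / clip κ₁ κ₂ p₂)| ≤
      M * ∫ x in cube (Fin dx), R x := by
  have hκ₂0 : 0 < κ₂ := hκ₁.trans_le hκ
  have hsub : Set.Icc (κ₁ / κ₂) (κ₂ / κ₁) ⊆ Set.Icc (0:ℝ) (κ₂ / κ₁) :=
    Set.Icc_subset_Icc (by positivity) le_rfl
  have hpt : ∀ x, |g (clip κ₁ κ₂ (Q₁ x) / clip κ₁ κ₂ p₁) -
      g (clip κ₁ κ₂ (Q₂ x) / clip κ₁ κ₂ p₂)| ≤ M * R x := by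
    intro x
    have hq₁ := clip_mem hκ (Q₁ x)
    have hq₂ := clip_mem hκ (Q₂ x)
    have hp₁ := clip_mem hκ p₁
    have hp₂ := clip_mem hκ p₂
    calc |g (clip κ₁ κ₂ (Q₁ x) / clip κ₁ κ₂ p₁) - g (clip κ₁ κ₂ (Q₂ x) / clip κ₁ κ₂ p₂)|
        ≤ M * |clip κ₁ κ₂ (Q₁ x) / clip κ₁ κ₂ p₁ - clip κ₁ κ₂ (Q₂ x) / clip κ₁ κ₂ p₂| :=
          hLip _ (hsub (ratio_mem hκ₁ hq₁ hp₁)) _ (hsub (ratio_mem hκ₁ hq₂ hp₂))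
      _ ≤ M * (|clip κ₁ κ₂ (Q₁ x) - clip κ₁ κ₂ (Q₂ x)| / κ₁ +
            κ₂ * |clip κ₁ κ₂ p₁ - clip κ₁ κ₂ p₂| / κ₁ ^ 2) :=
          mul_le_mul_of_nonneg_left (ratio_diff hκ₁ hq₂ hp₁ hp₂) hM0
      _ ≤ M * (|Q₁ x - Q₂ x| / κ₁ + κ₂ * |p₁ - p₂| / κ₁ ^ 2) := by
          refine mul_le_mul_of_nonneg_left (add_le_add ?_ ?_) hM0
          · exact div_le_div₀ (abs_nonneg _) (clip_lipschitz _ _ _ _) hκ₁ le_rfl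
          · exact div_le_div₀ (by positivity)
              (mul_le_mul_of_nonneg_left (clip_lipschitz _ _ _ _) hκ₂0.le)
              (pow_pos hκ₁ 2) le_rfl
      _ ≤ M * R x := mul_le_mul_of_nonneg_left (hRb x) hM0
  rw [← integral_sub hI₁ hI₂]
  calc |∫ x in cube (Fin dx), (g (clip κ₁ κ₂ (Q₁ x) / clip κ₁ κ₂ p₁) -
          g (clip κ₁ κ₂ (Q₂ x) / clip κ₁ κ₂ p₂))|
      ≤ ∫ x in cube (Fin dx), |g (clip κ₁ κ₂ (Q₁ x) / clip κ₁ κ₂ p₁) -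
          g (clip κ₁ κ₂ (Q₂ x) / clip κ₁ κ₂ p₂)| := by
        have := norm_integral_le_integral_norm (μ := volume.restrict (cube (Fin dx)))
          fun x => g (clip κ₁ κ₂ (Q₁ x) / clip κ₁ κ₂ p₁) -
            g (clip κ₁ κ₂ (Q₂ x) / clip κ₁ κ₂ p₂)
        simpa [Real.norm_eq_abs] using this
    _ ≤ ∫ x in cube (Fin dx), M * R x :=
        integral_mono_of_nonneg (Filter.Eventually.of_forall fun x => abs_nonneg _)
          (hR.const_mul M) (Filter.Eventually.of_forall hpt)
    _ = M * ∫ x in cube (Fin dx), R x := integral_const_mul M R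

end StabilityHelpers4

/-- **Stability of the inner conditional functional.** Let `(Q₁, Pz₁)` and `(Q₂, Pz₂)`
be pairs of clipped mirrored KDE estimates of `P(x,z)` and `P(z)` (values in
`[κ₁,κ₂]`), computed from split samples of size `n` each, differing in exactly one data
point, and let `g` be continuously differentiable on `[0, κ₂/κ₁]`. Then
`∫_Z |G_{P₁(z)}(P₁(·,z)) − G_{P₂(z)}(P₂(·,z))| dz ≤ C_V/n`, where
`G_{P(z)}(Q) = ∫_X g(Q(x)/P(z)) dx` and `C_V` depends on
`sup_{[κ₁/κ₂,κ₂/κ₁]} |g'|` and `‖K‖₁`. -/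
theorem inner_functional_stability {dx dz : ℕ} (κ₁ κ₂ : ℝ) (hκ₁ : 0 < κ₁)
    (hκ : κ₁ ≤ κ₂) (g : ℝ → ℝ) (hg : ContDiffOn ℝ 1 g (Set.Icc 0 (κ₂ / κ₁)))
    (K : ℝ → ℝ) (hKm : Measurable K) (hKi : Integrable K) :
    ∃ C_V : ℝ, ∀ n : ℕ, 1 ≤ n → ∀ h : ℝ, 0 < h →
      ∀ (W₁ W₂ : Fin n → (Fin (dx + dz) → ℝ)) (Z₁ Z₂ : Fin n → (Fin dz → ℝ)),
      -- the two pairs of samples differ in exactly one data point: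
      ((Z₁ = Z₂ ∧ ∃ i₀ : Fin n, ∀ m : Fin n, m ≠ i₀ → W₁ m = W₂ m) ∨
        (W₁ = W₂ ∧ ∃ i₀ : Fin n, ∀ m : Fin n, m ≠ i₀ → Z₁ m = Z₂ m)) →
      (∫ z in cube (Fin dz),
          |(∫ x in cube (Fin dx),
              g (clip κ₁ κ₂ (mKDE K h W₁ (Fin.append x z)) /
                  clip κ₁ κ₂ (mKDE K h Z₁ z))) -
            ∫ x in cube (Fin dx),
              g (clip κ₁ κ₂ (mKDE K h W₂ (Fin.append x z)) /
                  clip κ₁ κ₂ (mKDE K h Z₂ z))|) ≤ C_V / n := by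
  classical
  obtain ⟨M, hM0, hLip⟩ := exists_lip hκ₁ hκ hg
  have hκ₂0 : 0 < κ₂ := hκ₁.trans_le hκ
  have hK10 : 0 ≤ K1 K := K1_nonneg K
  set C₁ : ℝ := 2 * M * 3 ^ (dx + dz) * K1 K ^ (dx + dz) / κ₁ with hC₁
  set C₂ : ℝ := 2 * M * κ₂ * 3 ^ dz * K1 K ^ dz / κ₁ ^ 2 with hC₂
  have hC₁0 : 0 ≤ C₁ := by
    apply div_nonneg _ hκ₁.le
    have : (0:ℝ) ≤ 2 * M * 3 ^ (dx + dz) := by positivity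
    exact mul_nonneg this (pow_nonneg hK10 _)
  have hC₂0 : 0 ≤ C₂ := by
    apply div_nonneg _ (by positivity)
    have : (0:ℝ) ≤ 2 * M * κ₂ * 3 ^ dz := by positivity
    exact mul_nonneg this (pow_nonneg hK10 _)
  refine ⟨C₁ + C₂, ?_⟩
  intro n hn h hh W₁ W₂ Z₁ Z₂ hcase
  have hn0 : (0:ℝ) < n := by
    have : 0 < n := Nat.lt_of_lt_of_le Nat.zero_lt_one hn
    exact_mod_cast this
  rcases hcase with ⟨hZ, i₀, hW⟩ | ⟨hWeq, i₀, hZd⟩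
  · -- the `W` samples differ in one point
    subst hZ
    set y₁ := W₁ i₀ with hy₁
    set y₂ := W₂ i₀ with hy₂
    set c₀ : ℝ := 1 / (n * h ^ (dx + dz)) with hc₀
    have hc₀0 : 0 ≤ c₀ := by
      rw [hc₀]; positivity
    have key : ∀ z : Fin dz → ℝ,
        |(∫ x in cube (Fin dx),
            g (clip κ₁ κ₂ (mKDE K h W₁ (Fin.append x z)) / clip κ₁ κ₂ (mKDE K h Z₁ z))) -
          ∫ x in cube (Fin dx),
            g (clip κ₁ κ₂ (mKDE K h W₂ (Fin.append x z)) / clip κ₁ κ₂ (mKDE K h Z₁ z))| ≤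
        M * (c₀ / κ₁ * ((h * K1 K) ^ dx * (Tprof K h y₁ z + Tprof K h y₂ z))) := by
      intro z
      have hRb : ∀ x : Fin dx → ℝ,
          |mKDE K h W₁ (Fin.append x z) - mKDE K h W₂ (Fin.append x z)| / κ₁ +
            κ₂ * |mKDE K h Z₁ z - mKDE K h Z₁ z| / κ₁ ^ 2 ≤
          c₀ / κ₁ * (|mirrorTerm K h y₁ (Fin.append x z)| +
            |mirrorTerm K h y₂ (Fin.append x z)|) := by
        intro x
        rw [sub_self, abs_zero, mul_zero, zero_div, add_zero]
        have e1 : |mKDE K h W₁ (Fin.append x z) - mKDE K h W₂ (Fin.append x z)| ≤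
            c₀ * (|mirrorTerm K h y₁ (Fin.append x z)| +
              |mirrorTerm K h y₂ (Fin.append x z)|) := by
          rw [mKDE_sub K h W₁ W₂ i₀ hW (Fin.append x z), abs_mul]
          simp only [Fintype.card_fin]
          rw [abs_of_nonneg hc₀0]
          exact mul_le_mul_of_nonneg_left (abs_sub _ _) hc₀0
        calc |mKDE K h W₁ (Fin.append x z) - mKDE K h W₂ (Fin.append x z)| / κ₁
            ≤ c₀ * (|mirrorTerm K h y₁ (Fin.append x z)| +
                |mirrorTerm K h y₂ (Fin.append x z)|) / κ₁ :=
              div_le_div₀ (by positivity) e1 hκ₁ le_rfl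
          _ = c₀ / κ₁ * (|mirrorTerm K h y₁ (Fin.append x z)| +
                |mirrorTerm K h y₂ (Fin.append x z)|) := by ring
      have hb := inner_bound hκ₁ hκ hM0 hLip
        (fun x => mKDE K h W₁ (Fin.append x z)) (fun x => mKDE K h W₂ (Fin.append x z))
        (mKDE K h Z₁ z) (mKDE K h Z₁ z)
        (integrableOn_g_ratio hκ₁ hκ hg
          ((measurable_mKDE hKm h W₁).comp (measurable_append_left z)) _)
        (integrableOn_g_ratio hκ₁ hκ hg
          ((measurable_mKDE hKm h W₂).comp (measurable_append_left z)) _)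
        (fun x => c₀ / κ₁ * (|mirrorTerm K h y₁ (Fin.append x z)| +
          |mirrorTerm K h y₂ (Fin.append x z)|))
        (((integrableOn_mirrorTerm_append hKi hh.ne' y₁ z).add
          (integrableOn_mirrorTerm_append hKi hh.ne' y₂ z)).const_mul _)
        hRb
      refine hb.trans ?_
      refine mul_le_mul_of_nonneg_left ?_ hM0
      rw [MeasureTheory.integral_const_mul,
        MeasureTheory.integral_add (integrableOn_mirrorTerm_append hKi hh.ne' y₁ z)
          (integrableOn_mirrorTerm_append hKi hh.ne' y₂ z)]
      refine mul_le_mul_of_nonneg_left ?_ (by positivity)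
      calc (∫ x in cube (Fin dx), |mirrorTerm K h y₁ (Fin.append x z)|) +
            ∫ x in cube (Fin dx), |mirrorTerm K h y₂ (Fin.append x z)|
          ≤ (h * K1 K) ^ dx * Tprof K h y₁ z + (h * K1 K) ^ dx * Tprof K h y₂ z :=
            add_le_add (setIntegral_abs_mirrorTerm_append_le hKi hh y₁ z)
              (setIntegral_abs_mirrorTerm_append_le hKi hh y₂ z)
        _ = (h * K1 K) ^ dx * (Tprof K h y₁ z + Tprof K h y₂ z) := by ring
    have hTint : IntegrableOn
        (fun z => M * (c₀ / κ₁ * ((h * K1 K) ^ dx * (Tprof K h y₁ z + Tprof K h y₂ z))))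
        (cube (Fin dz)) := by
      exact ((((integrableOn_Tprof hKi hh.ne' y₁).add
        (integrableOn_Tprof hKi hh.ne' y₂)).const_mul ((h * K1 K) ^ dx)).const_mul
        (c₀ / κ₁)).const_mul M
    calc (∫ z in cube (Fin dz),
          |(∫ x in cube (Fin dx),
              g (clip κ₁ κ₂ (mKDE K h W₁ (Fin.append x z)) / clip κ₁ κ₂ (mKDE K h Z₁ z))) -
            ∫ x in cube (Fin dx),
              g (clip κ₁ κ₂ (mKDE K h W₂ (Fin.append x z)) / clip κ₁ κ₂ (mKDE K h Z₁ z))|)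
        ≤ ∫ z in cube (Fin dz),
            M * (c₀ / κ₁ * ((h * K1 K) ^ dx * (Tprof K h y₁ z + Tprof K h y₂ z))) :=
          integral_mono_of_nonneg (Filter.Eventually.of_forall fun z => abs_nonneg _)
            hTint (Filter.Eventually.of_forall key)
      _ = M * (c₀ / κ₁ * ((h * K1 K) ^ dx *
            ((∫ z in cube (Fin dz), Tprof K h y₁ z) +
              ∫ z in cube (Fin dz), Tprof K h y₂ z))) := by
          rw [MeasureTheory.integral_const_mul, MeasureTheory.integral_const_mul,
            MeasureTheory.integral_const_mul,
            MeasureTheory.integral_add (integrableOn_Tprof hKi hh.ne' y₁)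
              (integrableOn_Tprof hKi hh.ne' y₂)]
      _ ≤ M * (c₀ / κ₁ * ((h * K1 K) ^ dx *
            (3 ^ (dx + dz) * (h * K1 K) ^ dz + 3 ^ (dx + dz) * (h * K1 K) ^ dz))) := by
          refine mul_le_mul_of_nonneg_left (mul_le_mul_of_nonneg_left
            (mul_le_mul_of_nonneg_left ?_ (by positivity)) (by positivity)) hM0
          exact add_le_add (setIntegral_Tprof_le hKi hh y₁) (setIntegral_Tprof_le hKi hh y₂)
      _ = C₁ / n := by
          rw [hC₁, hc₀]
          field_simp
          ring
      _ ≤ (C₁ + C₂) / n := by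
          gcongr
          exact le_add_of_nonneg_right hC₂0
  · -- the `Z` samples differ in one point
    subst hWeq
    set c₁ : ℝ := 1 / (n * h ^ dz) with hc₁
    have hc₁0 : 0 ≤ c₁ := by rw [hc₁]; positivity
    have hvol : (volume (cube (Fin dx))).toReal = 1 := by
      rw [show cube (Fin dx) = Set.Icc 0 1 from rfl,
        Real.volume_Icc_pi_toReal zero_le_one]
      simp
    have key : ∀ z : Fin dz → ℝ,
        |(∫ x in cube (Fin dx),
            g (clip κ₁ κ₂ (mKDE K h W₁ (Fin.append x z)) / clip κ₁ κ₂ (mKDE K h Z₁ z))) -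
          ∫ x in cube (Fin dx),
            g (clip κ₁ κ₂ (mKDE K h W₁ (Fin.append x z)) / clip κ₁ κ₂ (mKDE K h Z₂ z))| ≤
        M * κ₂ / κ₁ ^ 2 * c₁ *
          (|mirrorTerm K h (Z₁ i₀) z| + |mirrorTerm K h (Z₂ i₀) z|) := by
      intro z
      have hRb : ∀ x : Fin dx → ℝ,
          |mKDE K h W₁ (Fin.append x z) - mKDE K h W₁ (Fin.append x z)| / κ₁ +
            κ₂ * |mKDE K h Z₁ z - mKDE K h Z₂ z| / κ₁ ^ 2 ≤
          κ₂ * |mKDE K h Z₁ z - mKDE K h Z₂ z| / κ₁ ^ 2 := by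
        intro x
        rw [sub_self, abs_zero, zero_div, zero_add]
      have hb := inner_bound hκ₁ hκ hM0 hLip
        (fun x => mKDE K h W₁ (Fin.append x z)) (fun x => mKDE K h W₁ (Fin.append x z))
        (mKDE K h Z₁ z) (mKDE K h Z₂ z)
        (integrableOn_g_ratio hκ₁ hκ hg
          ((measurable_mKDE hKm h W₁).comp (measurable_append_left z)) _)
        (integrableOn_g_ratio hκ₁ hκ hg
          ((measurable_mKDE hKm h W₁).comp (measurable_append_left z)) _)
        (fun _ => κ₂ * |mKDE K h Z₁ z - mKDE K h Z₂ z| / κ₁ ^ 2)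
        (integrableOn_const (IsCompact.measure_lt_top isCompact_Icc).ne)
        hRb
      refine hb.trans ?_
      rw [MeasureTheory.setIntegral_const, measureReal_def, hvol, one_smul]
      have e1 : |mKDE K h Z₁ z - mKDE K h Z₂ z| ≤
          c₁ * (|mirrorTerm K h (Z₁ i₀) z| + |mirrorTerm K h (Z₂ i₀) z|) := by
        rw [mKDE_sub K h Z₁ Z₂ i₀ hZd z, abs_mul]
        simp only [Fintype.card_fin]
        rw [abs_of_nonneg hc₁0]
        exact mul_le_mul_of_nonneg_left (abs_sub _ _) hc₁0
      calc M * (κ₂ * |mKDE K h Z₁ z - mKDE K h Z₂ z| / κ₁ ^ 2)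
          ≤ M * (κ₂ * (c₁ * (|mirrorTerm K h (Z₁ i₀) z| + |mirrorTerm K h (Z₂ i₀) z|)) /
              κ₁ ^ 2) := by
            refine mul_le_mul_of_nonneg_left ?_ hM0
            exact div_le_div₀ (by positivity)
              (mul_le_mul_of_nonneg_left e1 hκ₂0.le) (pow_pos hκ₁ 2) le_rfl
        _ = M * κ₂ / κ₁ ^ 2 * c₁ *
              (|mirrorTerm K h (Z₁ i₀) z| + |mirrorTerm K h (Z₂ i₀) z|) := by ring
    have hGint : IntegrableOn
        (fun z => M * κ₂ / κ₁ ^ 2 * c₁ *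
          (|mirrorTerm K h (Z₁ i₀) z| + |mirrorTerm K h (Z₂ i₀) z|)) (cube (Fin dz)) := by
      exact (((integrable_mirrorTerm hKi hh.ne' (Z₁ i₀)).abs.add
        (integrable_mirrorTerm hKi hh.ne' (Z₂ i₀)).abs).integrableOn).const_mul _
    calc (∫ z in cube (Fin dz),
          |(∫ x in cube (Fin dx),
              g (clip κ₁ κ₂ (mKDE K h W₁ (Fin.append x z)) / clip κ₁ κ₂ (mKDE K h Z₁ z))) -
            ∫ x in cube (Fin dx),
              g (clip κ₁ κ₂ (mKDE K h W₁ (Fin.append x z)) / clip κ₁ κ₂ (mKDE K h Z₂ z))|)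
        ≤ ∫ z in cube (Fin dz), M * κ₂ / κ₁ ^ 2 * c₁ *
            (|mirrorTerm K h (Z₁ i₀) z| + |mirrorTerm K h (Z₂ i₀) z|) :=
          integral_mono_of_nonneg (Filter.Eventually.of_forall fun z => abs_nonneg _)
            hGint (Filter.Eventually.of_forall key)
      _ = M * κ₂ / κ₁ ^ 2 * c₁ *
            ((∫ z in cube (Fin dz), |mirrorTerm K h (Z₁ i₀) z|) +
              ∫ z in cube (Fin dz), |mirrorTerm K h (Z₂ i₀) z|) := by
          rw [MeasureTheory.integral_const_mul,
            MeasureTheory.integral_add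
              ((integrable_mirrorTerm hKi hh.ne' (Z₁ i₀)).abs.integrableOn)
              ((integrable_mirrorTerm hKi hh.ne' (Z₂ i₀)).abs.integrableOn)]
      _ ≤ M * κ₂ / κ₁ ^ 2 * c₁ *
            (3 ^ dz * (h * K1 K) ^ dz + 3 ^ dz * (h * K1 K) ^ dz) := by
          refine mul_le_mul_of_nonneg_left ?_ (by positivity)
          have b1 := setIntegral_abs_mirrorTerm_le hKi hh (Z₁ i₀)
          have b2 := setIntegral_abs_mirrorTerm_le hKi hh (Z₂ i₀)
          simp only [Fintype.card_fin] at b1 b2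
          exact add_le_add b1 b2
      _ = C₂ / n := by
          rw [hC₂, hc₁]
          field_simp
          ring
      _ ≤ (C₁ + C₂) / n := by
          gcongr
          exact le_add_of_nonneg_left hC₁0
end
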